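/- arXiv:1611.04032 — 6 statements merged into one kernel-verified Lean document; each statement's English description precedes it below -/
import Mathlib

section
/- Let D ≥ 3, k ≥ 1, and let G be a closed bipartite (D+1)-colored graph with 2k vertices. Then (D+1)·(2/(D−1)!)·ω(G) + 2·F_1(G) = D(D+1) + Σ_{s≥2} (s(D−1) − D − 1)·F_s(G), where the sum runs over all face lengths s ≥ 2 occurring in G; moreover each coefficient s(D−1) − D − 1 with s ≥ 2 is nonnegative. -/
open scoped Classical

noncomputable section

/-- Number of cycles of a permutation of `Fin k`, counting fixed points
as cycles of length 1. -/
def numCycles {k : ℕ} (τ : Equiv.Perm (Fin k)) : ℕ :=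
  τ.cycleType.card + (Finset.univ.filter fun i => τ i = i).card

/-- `F^{c₁c₂}(G)`: the number of faces with colors `c₁c₂`, i.e. the number of
cycles of `(σ c₂)⁻¹ * σ c₁` (fixed points counting as cycles of length 1). -/
def faceCount (D k : ℕ) (σ : Fin (D + 1) → Equiv.Perm (Fin k)) (c₁ c₂ : Fin (D + 1)) : ℕ :=
  numCycles ((σ c₂)⁻¹ * σ c₁)

/-- `F(G)`: total number of faces. -/
def totalFaces (D k : ℕ) (σ : Fin (D + 1) → Equiv.Perm (Fin k)) : ℕ :=
  ∑ p ∈ Finset.univ.filter (fun p : Fin (D + 1) × Fin (D + 1) => p.1 < p.2),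
    faceCount D k σ p.1 p.2

/-- The degree `ω(G) := ((D−1)!/2) · (D + (D(D−1)/2)·k − F(G))`. -/
def degree (D k : ℕ) (σ : Fin (D + 1) → Equiv.Perm (Fin k)) : ℚ :=
  ((D - 1).factorial : ℚ) / 2 *
    ((D : ℚ) + (D : ℚ) * ((D : ℚ) - 1) / 2 * (k : ℚ) - (totalFaces D k σ : ℚ))

/-- `G` is connected: the subgroup generated by the `(σ c')⁻¹ * σ c` acts
transitively on `Fin k`. -/
def Connected (D k : ℕ) (σ : Fin (D + 1) → Equiv.Perm (Fin k)) : Prop :=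
  ∀ i j : Fin k, ∃ g ∈ Subgroup.closure
    {g : Equiv.Perm (Fin k) | ∃ c c' : Fin (D + 1), g = (σ c')⁻¹ * σ c}, g i = j

/-- A permutation of `Fin m` which is a single `m`-cycle. -/
def IsFullCycle {m : ℕ} (π : Equiv.Perm (Fin m)) : Prop :=
  π.IsCycle ∧ π.support = Finset.univ

/-- `Φ_π(G) := Σ_{q=0}^{D} F^{π^q(0), π^{q+1}(0)}(G)`, the face count of the
jacket associated to the `(D+1)`-cycle `π` on the colors. -/
def jacketFaces (D k : ℕ) (σ : Fin (D + 1) → Equiv.Perm (Fin k))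
    (π : Equiv.Perm (Fin (D + 1))) : ℕ :=
  ∑ q ∈ Finset.range (D + 1), faceCount D k σ ((π ^ q) 0) ((π ^ (q + 1)) 0)

/-- `g_π(G) := (2 + (D−1)·k − Φ_π(G))/2`, the genus of the jacket of `π`. -/
def jacketGenus (D k : ℕ) (σ : Fin (D + 1) → Equiv.Perm (Fin k))
    (π : Equiv.Perm (Fin (D + 1))) : ℚ :=
  (2 + ((D : ℚ) - 1) * (k : ℚ) - (jacketFaces D k σ π : ℚ)) / 2

/-- The number of cycles of length `s` of a permutation of `Fin k`
(fixed points counting as cycles of length 1). -/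
def numCyclesLen {k : ℕ} (τ : Equiv.Perm (Fin k)) (s : ℕ) : ℕ :=
  if s = 1 then (Finset.univ.filter fun i => τ i = i).card else τ.cycleType.count s

/-- `F_s(G)`: the number of faces of `G` with `2s` vertices. -/
def facesLen (D k : ℕ) (σ : Fin (D + 1) → Equiv.Perm (Fin k)) (s : ℕ) : ℕ :=
  ∑ p ∈ Finset.univ.filter (fun p : Fin (D + 1) × Fin (D + 1) => p.1 < p.2),
    numCyclesLen ((σ p.2)⁻¹ * σ p.1) s


-- Auxiliary lemmas ----------------------------------------------------------

lemma cycleType_toFinset_subset {k : ℕ} (τ : Equiv.Perm (Fin k)) :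
    τ.cycleType.toFinset ⊆ Finset.Icc 2 k := by
  intro s hs
  rw [Multiset.mem_toFinset] at hs
  rw [Finset.mem_Icc]
  refine ⟨Equiv.Perm.two_le_of_mem_cycleType hs, ?_⟩
  calc s ≤ τ.cycleType.sum := Multiset.single_le_sum (fun x _ => Nat.zero_le x) _ hs
    _ = τ.support.card := Equiv.Perm.sum_cycleType τ
    _ ≤ k := by simpa using Finset.card_le_card (Finset.subset_univ τ.support)

lemma sum_count_cycleType {k : ℕ} (τ : Equiv.Perm (Fin k)) :
    ∑ s ∈ Finset.Icc 2 k, τ.cycleType.count s = Multiset.card τ.cycleType := by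
  rw [← Multiset.toFinset_sum_count_eq]
  exact (Finset.sum_subset (cycleType_toFinset_subset τ) (fun x _ hx =>
    Multiset.count_eq_zero.2 (by simpa [Multiset.mem_toFinset] using hx))).symm

lemma sum_mul_count_cycleType {k : ℕ} (τ : Equiv.Perm (Fin k)) :
    ∑ s ∈ Finset.Icc 2 k, s * τ.cycleType.count s = τ.support.card := by
  rw [← Equiv.Perm.sum_cycleType, Finset.sum_multiset_count]
  refine (Finset.sum_subset (cycleType_toFinset_subset τ) (fun x _ hx => ?_)).symm.trans ?_
  · rw [Multiset.count_eq_zero.2 (by simpa [Multiset.mem_toFinset] using hx)]; simp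
  · exact Finset.sum_congr rfl (fun x _ => by rw [smul_eq_mul, mul_comm])

lemma fixed_add_support_card {k : ℕ} (τ : Equiv.Perm (Fin k)) :
    (Finset.univ.filter fun i => τ i = i).card + τ.support.card = k := by
  have h : τ.support = Finset.univ.filter (fun i => ¬ τ i = i) := by
    ext x; simp [Equiv.Perm.mem_support]
  rw [h]
  simpa using Finset.card_filter_add_card_filter_not (s := Finset.univ)
    (fun i => τ i = i)

lemma Icc_one_eq_insert {k : ℕ} (hk : 1 ≤ k) :
    Finset.Icc 1 k = insert 1 (Finset.Icc 2 k) := by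
  ext x; simp only [Finset.mem_Icc, Finset.mem_insert]; omega

lemma sum_numCyclesLen {k : ℕ} (hk : 1 ≤ k) (τ : Equiv.Perm (Fin k)) :
    ∑ s ∈ Finset.Icc 1 k, numCyclesLen τ s = numCycles τ := by
  rw [Icc_one_eq_insert hk, Finset.sum_insert (by simp)]
  have h1 : numCyclesLen τ 1 = (Finset.univ.filter fun i => τ i = i).card := if_pos rfl
  have h2 : ∑ s ∈ Finset.Icc 2 k, numCyclesLen τ s = Multiset.card τ.cycleType := by
    rw [← sum_count_cycleType τ]
    refine Finset.sum_congr rfl (fun s hs => ?_)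
    have : s ≠ 1 := by rw [Finset.mem_Icc] at hs; omega
    exact if_neg this
  rw [h1, h2, numCycles, add_comm]

lemma sum_mul_numCyclesLen {k : ℕ} (hk : 1 ≤ k) (τ : Equiv.Perm (Fin k)) :
    ∑ s ∈ Finset.Icc 1 k, s * numCyclesLen τ s = k := by
  rw [Icc_one_eq_insert hk, Finset.sum_insert (by simp)]
  have h1 : numCyclesLen τ 1 = (Finset.univ.filter fun i => τ i = i).card := if_pos rfl
  have h2 : ∑ s ∈ Finset.Icc 2 k, s * numCyclesLen τ s = τ.support.card := by
    rw [← sum_mul_count_cycleType τ]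
    refine Finset.sum_congr rfl (fun s hs => ?_)
    have : s ≠ 1 := by rw [Finset.mem_Icc] at hs; omega
    rw [numCyclesLen, if_neg this]
  rw [h1, h2, one_mul]
  exact fixed_add_support_card τ

lemma two_mul_card_lt_pairs (n : ℕ) :
    2 * (Finset.univ.filter fun p : Fin n × Fin n => p.1 < p.2).card + n = n * n := by
  have hsym : (Finset.univ.filter fun p : Fin n × Fin n => p.1 < p.2).card
      = (Finset.univ.filter fun p : Fin n × Fin n => p.2 < p.1).card := by
    apply Finset.card_bij' (fun p _ => (p.2, p.1)) (fun p _ => (p.2, p.1)) <;>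
      simp [Finset.mem_filter]
  have hunion : (Finset.univ.filter fun p : Fin n × Fin n => p.1 < p.2)
      ∪ (Finset.univ.filter fun p : Fin n × Fin n => p.2 < p.1)
      = Finset.univ.filter fun p : Fin n × Fin n => p.1 ≠ p.2 := by
    ext p
    simp only [Finset.mem_union, Finset.mem_filter, Finset.mem_univ, true_and]
    constructor
    · rintro (h | h) <;> [exact h.ne; exact h.ne']
    · intro h; exact lt_or_gt_of_ne h
  have hdisj : Disjoint (Finset.univ.filter fun p : Fin n × Fin n => p.1 < p.2)
      (Finset.univ.filter fun p : Fin n × Fin n => p.2 < p.1) := by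
    rw [Finset.disjoint_filter]
    intro p _ h h'
    exact absurd h' (not_lt_of_gt h)
  have hcard := Finset.card_union_of_disjoint hdisj
  rw [hunion] at hcard
  have hcompl : (Finset.univ.filter fun p : Fin n × Fin n => p.1 ≠ p.2).card
      + (Finset.univ.filter fun p : Fin n × Fin n => p.1 = p.2).card = n * n := by
    have := Finset.card_filter_add_card_filter_not
      (s := (Finset.univ : Finset (Fin n × Fin n))) (fun p => p.1 ≠ p.2)
    simpa [not_not, Fintype.card_prod] using this
  have hdiag : (Finset.univ.filter fun p : Fin n × Fin n => p.1 = p.2).card = n := by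
    rw [show (Finset.univ.filter fun p : Fin n × Fin n => p.1 = p.2)
        = Finset.univ.image (fun a : Fin n => (a, a)) by
      ext p; simp only [Finset.mem_filter, Finset.mem_univ, true_and, Finset.mem_image]
      constructor
      · intro h; exact ⟨p.1, by simp [Prod.ext_iff, h.symm]⟩
      · rintro ⟨a, ha⟩; simp [← ha]]
    rw [Finset.card_image_of_injective _ (fun a b h => by simpa [Prod.ext_iff] using h)]
    simp
  omega

lemma sum_facesLen {D k : ℕ} (hk : 1 ≤ k) (σ : Fin (D + 1) → Equiv.Perm (Fin k)) :
    ∑ s ∈ Finset.Icc 1 k, facesLen D k σ s = totalFaces D k σ := by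
  unfold facesLen totalFaces faceCount
  rw [Finset.sum_comm]
  exact Finset.sum_congr rfl (fun p _ => sum_numCyclesLen hk _)

lemma sum_mul_facesLen {D k : ℕ} (hk : 1 ≤ k) (σ : Fin (D + 1) → Equiv.Perm (Fin k)) :
    ∑ s ∈ Finset.Icc 1 k, s * facesLen D k σ s
      = (Finset.univ.filter fun p : Fin (D + 1) × Fin (D + 1) => p.1 < p.2).card * k := by
  unfold facesLen
  calc ∑ s ∈ Finset.Icc 1 k, s *
        ∑ p ∈ Finset.univ.filter (fun p : Fin (D + 1) × Fin (D + 1) => p.1 < p.2),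
          numCyclesLen ((σ p.2)⁻¹ * σ p.1) s
      = ∑ p ∈ Finset.univ.filter (fun p : Fin (D + 1) × Fin (D + 1) => p.1 < p.2),
          ∑ s ∈ Finset.Icc 1 k, s * numCyclesLen ((σ p.2)⁻¹ * σ p.1) s := by
        rw [Finset.sum_comm]
        exact Finset.sum_congr rfl (fun s _ => Finset.mul_sum _ _ _)
    _ = _ := by
        rw [Finset.sum_congr rfl (fun p _ => sum_mul_numCyclesLen hk _), Finset.sum_const,
          smul_eq_mul]

/-- For any closed bipartite `(D+1)`-colored graph `G` with `2k` vertices,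
`(D+1)·(2/(D−1)!)·ω(G) + 2·F₁(G) = D(D+1) + Σ_{s≥2} (s(D−1) − D − 1)·F_s(G)`, and each
coefficient `s(D−1) − D − 1` with `s ≥ 2` is nonnegative.  (The cycle lengths of a
permutation of `Fin k` are at most `k`, so the sum over `s ∈ [2, k]` runs over all face
lengths `s ≥ 2` occurring in `G`.) -/
theorem face_length_identity (D k : ℕ) (hD : 3 ≤ D) (hk : 1 ≤ k)
    (σ : Fin (D + 1) → Equiv.Perm (Fin k)) :
    ((D : ℚ) + 1) * (2 / ((D - 1).factorial : ℚ)) * degree D k σ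
        + 2 * (facesLen D k σ 1 : ℚ) =
      (D : ℚ) * ((D : ℚ) + 1)
        + ∑ s ∈ Finset.Icc 2 k,
            ((s : ℚ) * ((D : ℚ) - 1) - (D : ℚ) - 1) * (facesLen D k σ s : ℚ) ∧
    ∀ s : ℕ, 2 ≤ s → (0 : ℚ) ≤ (s : ℚ) * ((D : ℚ) - 1) - (D : ℚ) - 1  := by
  constructor
  · -- the identity
    set P := (Finset.univ.filter fun p : Fin (D + 1) × Fin (D + 1) => p.1 < p.2) with hP
    have hfact : ((D - 1).factorial : ℚ) ≠ 0 := by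
      exact_mod_cast Nat.factorial_ne_zero (D - 1)
    -- cardinality of the pair set
    have hNnat := two_mul_card_lt_pairs (D + 1)
    have hN : (P.card : ℚ) = ((D : ℚ) + 1) * (D : ℚ) / 2 := by
      have : (2 * P.card + (D + 1) : ℚ) = ((D : ℚ) + 1) * ((D : ℚ) + 1) := by
        exact_mod_cast hNnat
      linarith
    -- total faces decomposition
    have h1nat := sum_facesLen hk σ
    have h2nat := sum_mul_facesLen hk σ
    rw [Icc_one_eq_insert hk, Finset.sum_insert (by simp)] at h1nat h2nat
    have e1 : (totalFaces D k σ : ℚ)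
        = (facesLen D k σ 1 : ℚ) + ∑ s ∈ Finset.Icc 2 k, (facesLen D k σ s : ℚ) := by
      rw [← h1nat]; push_cast; ring
    have e2 : (facesLen D k σ 1 : ℚ)
        + ∑ s ∈ Finset.Icc 2 k, (s : ℚ) * (facesLen D k σ s : ℚ)
        = (P.card : ℚ) * (k : ℚ) := by
      have h := congrArg (fun n : ℕ => (n : ℚ)) h2nat
      push_cast at h; linarith [h]
    -- split the RHS sum
    have hsplit : ∑ s ∈ Finset.Icc 2 k,
          ((s : ℚ) * ((D : ℚ) - 1) - (D : ℚ) - 1) * (facesLen D k σ s : ℚ)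
        = ((D : ℚ) - 1) * ∑ s ∈ Finset.Icc 2 k, (s : ℚ) * (facesLen D k σ s : ℚ)
          - ((D : ℚ) + 1) * ∑ s ∈ Finset.Icc 2 k, (facesLen D k σ s : ℚ) := by
      rw [Finset.mul_sum, Finset.mul_sum, ← Finset.sum_sub_distrib]
      exact Finset.sum_congr rfl (fun s _ => by ring)
    rw [hsplit, degree]
    have key : ((D : ℚ) + 1) * (2 / ((D - 1).factorial : ℚ))
        * (((D - 1).factorial : ℚ) / 2 *
          ((D : ℚ) + (D : ℚ) * ((D : ℚ) - 1) / 2 * (k : ℚ) - (totalFaces D k σ : ℚ)))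
        = ((D : ℚ) + 1) *
          ((D : ℚ) + (D : ℚ) * ((D : ℚ) - 1) / 2 * (k : ℚ) - (totalFaces D k σ : ℚ)) := by
      field_simp
    rw [key]
    linear_combination (-(D : ℚ) - 1) * e1 + (-(D : ℚ) + 1) * e2
      + (-((D : ℚ) - 1) * (k : ℚ)) * hN
  · -- nonnegativity of the coefficients
    intro s hs
    have hs' : (2 : ℚ) ≤ (s : ℚ) := by exact_mod_cast hs
    have hD' : (3 : ℚ) ≤ (D : ℚ) := by exact_mod_cast hD
    nlinarith [mul_nonneg (by linarith : (0:ℚ) ≤ (s:ℚ) - 2) (by linarith : (0:ℚ) ≤ (D:ℚ) - 1)]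
end
end

section
/- Let D ≥ 3, k ≥ 1, and let G be a closed bipartite (D+1)-colored graph with 2k vertices having no face with exactly two vertices, i.e. F_1(G) = 0. Then the degree of G satisfies ω(G) ≥ D·(D−1)!/2. -/
open scoped Classical

noncomputable section

/-- A closed bipartite `(D+1)`-colored graph with `2k` vertices having no
face with exactly two vertices has degree at least `D·(D−1)!/2`. -/
theorem no_short_face_degree_lower_bound (D k : ℕ) (hD : 3 ≤ D) (hk : 1 ≤ k)
    (σ : Fin (D + 1) → Equiv.Perm (Fin k)) (hF₁ : facesLen D k σ 1 = 0) :
    (D : ℚ) * ((D - 1).factorial : ℚ) / 2 ≤ degree D k σ := by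
  set P := Finset.univ.filter (fun p : Fin (D + 1) × Fin (D + 1) => p.1 < p.2) with hP
  -- each face count is at most k/2
  have hface : ∀ p ∈ P, 2 * faceCount D k σ p.1 p.2 ≤ k := by
    intro p hp
    have hF₁' : ∑ p ∈ P, numCyclesLen ((σ p.2)⁻¹ * σ p.1) 1 = 0 := hF₁
    have h1 : numCyclesLen ((σ p.2)⁻¹ * σ p.1) 1 = 0 :=
      (Finset.sum_eq_zero_iff.mp hF₁') p hp
    set τ := (σ p.2)⁻¹ * σ p.1 with hτ
    have h1' : (Finset.univ.filter fun i => τ i = i).card = 0 := by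
      simpa [numCyclesLen] using h1
    have hcyc : 2 * τ.cycleType.card ≤ τ.cycleType.sum := by
      calc 2 * τ.cycleType.card = (Multiset.replicate τ.cycleType.card 2).sum := by
            simp [Multiset.sum_replicate, mul_comm]
        _ ≤ τ.cycleType.sum := by
            apply Multiset.sum_le_sum_of_rel_le
            rw [Multiset.rel_replicate_left]
            exact ⟨rfl, fun x hx => Equiv.Perm.two_le_of_mem_cycleType hx⟩
    have hsum : τ.cycleType.sum = τ.support.card := Equiv.Perm.sum_cycleType τ
    have hsupp : τ.support.card ≤ k := by
      simpa using Finset.card_le_card (Finset.subset_univ τ.support)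
    have hfc : faceCount D k σ p.1 p.2
        = Multiset.card τ.cycleType + (Finset.univ.filter fun i => τ i = i).card := rfl
    omega
  have hsum : 2 * totalFaces D k σ ≤ P.card * k := by
    rw [totalFaces, Finset.mul_sum]
    calc (∑ p ∈ P, 2 * faceCount D k σ p.1 p.2) ≤ ∑ p ∈ P, k :=
          Finset.sum_le_sum hface
      _ = P.card * k := by rw [Finset.sum_const, smul_eq_mul]
  -- compute P.card
  have hcard : 2 * P.card = (D + 1) * D := by
    have : P.card = ∑ c : Fin (D + 1), (c : ℕ) := by
      rw [hP, Finset.card_filter]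
      rw [Fintype.sum_prod_type_right]
      congr 1; ext c
      rw [Finset.sum_boole]
      norm_num
      rw [show (Finset.univ.filter (fun x => x < c)) = Finset.Iio c from by ext x; simp,
        Fin.card_Iio]
    rw [this, Fin.sum_univ_eq_sum_range (fun i => i)]
    beta_reduce
    rw [mul_comm, Finset.sum_range_id_mul_two]
    simp
  -- hence 4 F ≤ (D+1) D k ≤ 2 D (D-1) k
  have hF : 4 * totalFaces D k σ ≤ 2 * D * (D - 1) * k := by
    have h1 : 4 * totalFaces D k σ ≤ (D + 1) * D * k := by
      calc 4 * totalFaces D k σ = 2 * (2 * totalFaces D k σ) := by ring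
        _ ≤ 2 * (P.card * k) := by omega
        _ = (2 * P.card) * k := by ring
        _ = (D + 1) * D * k := by rw [hcard]
    have h2 : (D + 1) * D * k ≤ 2 * D * (D - 1) * k := by
      have : D + 1 ≤ 2 * (D - 1) := by omega
      calc (D + 1) * D * k ≤ (2 * (D - 1)) * D * k :=
            Nat.mul_le_mul_right k (Nat.mul_le_mul_right D this)
        _ = 2 * D * (D - 1) * k := by ring
    omega
  -- cast to ℚ and conclude
  have hFq : (totalFaces D k σ : ℚ) ≤ (D : ℚ) * ((D : ℚ) - 1) / 2 * k := by
    have h4 : ((4 * totalFaces D k σ : ℕ) : ℚ) ≤ ((2 * D * (D - 1) * k : ℕ) : ℚ) := by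
      exact_mod_cast hF
    have hD1 : ((D - 1 : ℕ) : ℚ) = (D : ℚ) - 1 := by
      have : 1 ≤ D := by omega
      push_cast [this]; ring
    push_cast [hD1] at h4
    linarith
  have hfac : (0 : ℚ) < ((D - 1).factorial : ℚ) := by exact_mod_cast (D - 1).factorial_pos
  rw [degree]
  rw [div_mul_eq_mul_div, div_le_div_iff₀ (by norm_num) (by norm_num)]
  have : (D : ℚ) ≤ (D : ℚ) + (D : ℚ) * ((D : ℚ) - 1) / 2 * (k : ℚ) - (totalFaces D k σ : ℚ) := by
    linarith
  nlinarith [hfac, this, (show (0:ℚ) ≤ (D:ℚ) from by positivity)]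
end
end

section
/- Let D ≥ 4, k ≥ 1, and let G be a closed bipartite (D+1)-colored graph with 2k vertices. Then the number of faces with more than two vertices and the maximal number of vertices of a face are bounded linearly in the degree ω(G) and the number F_1(G) of faces with two vertices: specifically, (D−3)·Σ_{s≥2} F_s(G) + D(D+1) ≤ (2(D+1)/(D−1)!)·ω(G) + 2·F_1(G), and every face of G with 2s vertices (s ≥ 2) satisfies s(D−1) + D(D+1) ≤ (D+1) + (2(D+1)/(D−1)!)·ω(G) + 2·F_1(G). -/
open scoped Classical

noncomputable section

lemma cycleType_mem_Icc {k : ℕ} (τ : Equiv.Perm (Fin k)) {a : ℕ} (ha : a ∈ τ.cycleType) :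
    a ∈ Finset.Icc 2 k := by
  rw [Finset.mem_Icc]
  refine ⟨Equiv.Perm.two_le_of_mem_cycleType ha, ?_⟩
  calc a ≤ τ.support.card := Equiv.Perm.le_card_support_of_mem_cycleType ha
    _ ≤ (Finset.univ : Finset (Fin k)).card := Finset.card_le_univ _
    _ = k := by simp

lemma numCycles_eq {k : ℕ} (τ : Equiv.Perm (Fin k)) :
    numCycles τ = numCyclesLen τ 1 + ∑ s ∈ Finset.Icc 2 k, numCyclesLen τ s := by
  have h1 : ∑ s ∈ Finset.Icc 2 k, numCyclesLen τ s = Multiset.card τ.cycleType := by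
    rw [Finset.sum_congr rfl (fun s hs => show numCyclesLen τ s = τ.cycleType.count s by
      have : s ≠ 1 := by have := (Finset.mem_Icc.1 hs).1; omega
      simp [numCyclesLen, this])]
    exact Multiset.sum_count_eq_card fun a ha => cycleType_mem_Icc τ ha
  have hf : numCyclesLen τ 1 = (Finset.univ.filter fun i => τ i = i).card := by
    simp [numCyclesLen]
  rw [numCycles, hf, h1]
  omega

lemma weighted_eq {k : ℕ} (τ : Equiv.Perm (Fin k)) :
    numCyclesLen τ 1 + ∑ s ∈ Finset.Icc 2 k, s * numCyclesLen τ s = k := by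
  have h2 : ∑ s ∈ Finset.Icc 2 k, s * numCyclesLen τ s = τ.support.card := by
    rw [← Equiv.Perm.sum_cycleType]
    have hstep : ∑ s ∈ Finset.Icc 2 k, s * numCyclesLen τ s
        = ∑ s ∈ Finset.Icc 2 k, τ.cycleType.count s • id s := by
      apply Finset.sum_congr rfl
      intro s hs
      have h1 : s ≠ 1 := by have := (Finset.mem_Icc.1 hs).1; omega
      simp [numCyclesLen, h1, mul_comm]
    rw [hstep,
      ← Finset.sum_subset (fun a ha => cycleType_mem_Icc τ (Multiset.mem_toFinset.1 ha))
        (fun x _ hnx => by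
          simp [Multiset.count_eq_zero.2 fun h => hnx (Multiset.mem_toFinset.2 h)]),
      ← Finset.sum_multiset_map_count, Multiset.map_id]
  have hsupp : τ.support = Finset.univ.filter (fun x => ¬ (τ x = x)) := by
    ext x; simp
  have := Finset.card_filter_add_card_filter_not
    (s := (Finset.univ : Finset (Fin k))) (p := fun i => τ i = i)
  simp only [Finset.card_univ, Fintype.card_fin] at this
  have hf : numCyclesLen τ 1 = (Finset.univ.filter fun i => τ i = i).card := by
    simp [numCyclesLen]
  rw [h2, hsupp, hf]
  omega

lemma numCyclesLen_zero {k : ℕ} (τ : Equiv.Perm (Fin k)) {s : ℕ} (h : k < s) (h2 : 2 ≤ s) :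
    numCyclesLen τ s = 0 := by
  have : s ≠ 1 := by omega
  simp only [numCyclesLen, if_neg this]
  rw [Multiset.count_eq_zero]
  intro hmem
  have := (Finset.mem_Icc.1 (cycleType_mem_Icc τ hmem)).2
  omega

lemma pairs_card (n : ℕ) :
    2 * (Finset.univ.filter fun p : Fin n × Fin n => p.1 < p.2).card = n * (n - 1) := by
  classical
  set L := Finset.univ.filter fun p : Fin n × Fin n => p.1 < p.2 with hL
  set Gt := Finset.univ.filter fun p : Fin n × Fin n => p.2 < p.1 with hG
  have himg : Gt = L.image Prod.swap := by
    ext ⟨a, b⟩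
    simp only [hL, hG, Finset.mem_filter, Finset.mem_image, Finset.mem_univ, true_and]
    constructor
    · intro h; exact ⟨(b, a), by simpa using h, rfl⟩
    · rintro ⟨⟨x, y⟩, hxy, h⟩
      obtain ⟨rfl, rfl⟩ : y = a ∧ x = b := by
        simpa [Prod.ext_iff] using h
      exact hxy
  have hcard : Gt.card = L.card := by
    rw [himg, Finset.card_image_of_injective _ Prod.swap_injective]
  have hdisj : Disjoint L Gt := by
    rw [Finset.disjoint_left]
    intro p hp hq
    simp only [hL, hG, Finset.mem_filter] at hp hq
    exact absurd hq.2 (lt_asymm hp.2)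
  have hunion : L ∪ Gt = Finset.univ.offDiag := by
    have : (Finset.univ : Finset (Fin n × Fin n)) = Finset.univ ×ˢ Finset.univ := by simp
    ext p
    simp only [hL, hG, Finset.mem_union, Finset.mem_filter, Finset.mem_univ, true_and,
      Finset.mem_offDiag]
    exact lt_or_lt_iff_ne
  have := Finset.card_union_of_disjoint hdisj
  rw [hunion, Finset.offDiag_card, hcard] at this
  simp only [Finset.card_univ, Fintype.card_fin] at this
  have hq : n * n = n * (n - 1) + n := by
    rcases n with _ | m
    · rfl
    · simp only [Nat.succ_sub_one]; ring
  omega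

lemma totalFaces_eq (D k : ℕ) (σ : Fin (D + 1) → Equiv.Perm (Fin k)) :
    totalFaces D k σ = facesLen D k σ 1 + ∑ s ∈ Finset.Icc 2 k, facesLen D k σ s := by
  unfold totalFaces faceCount facesLen
  rw [Finset.sum_congr rfl fun p _ => numCycles_eq ((σ p.2)⁻¹ * σ p.1),
    Finset.sum_add_distrib, Finset.sum_comm]

lemma weightedFaces_eq (D k : ℕ) (σ : Fin (D + 1) → Equiv.Perm (Fin k)) :
    facesLen D k σ 1 + ∑ s ∈ Finset.Icc 2 k, s * facesLen D k σ s =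
      k * (Finset.univ.filter fun p : Fin (D + 1) × Fin (D + 1) => p.1 < p.2).card := by
  unfold facesLen
  have h : ∑ s ∈ Finset.Icc 2 k, s * ∑ p ∈ Finset.univ.filter
        (fun p : Fin (D + 1) × Fin (D + 1) => p.1 < p.2), numCyclesLen ((σ p.2)⁻¹ * σ p.1) s
      = ∑ p ∈ Finset.univ.filter (fun p : Fin (D + 1) × Fin (D + 1) => p.1 < p.2),
        ∑ s ∈ Finset.Icc 2 k, s * numCyclesLen ((σ p.2)⁻¹ * σ p.1) s := by
    rw [Finset.sum_comm]
    apply Finset.sum_congr rfl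
    intro s _
    rw [Finset.mul_sum]
  rw [h, ← Finset.sum_add_distrib,
    Finset.sum_congr rfl fun p _ => weighted_eq ((σ p.2)⁻¹ * σ p.1),
    Finset.sum_const, smul_eq_mul, mul_comm]

/-- For `D ≥ 4`, the number of faces with more than two vertices, and the
maximal number of vertices of a face, of a closed bipartite `(D+1)`-colored graph with `2k`
vertices are bounded linearly in the degree `ω(G)` and the number `F₁(G)` of faces with two
vertices:
`(D−3)·Σ_{s≥2} F_s(G) + D(D+1) ≤ (2(D+1)/(D−1)!)·ω(G) + 2·F₁(G)`, and every face with `2s`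
vertices (`s ≥ 2`) satisfies
`s(D−1) + D(D+1) ≤ (D+1) + (2(D+1)/(D−1)!)·ω(G) + 2·F₁(G)`. -/
theorem large_faces_bounded (D k : ℕ) (hD : 4 ≤ D) (hk : 1 ≤ k)
    (σ : Fin (D + 1) → Equiv.Perm (Fin k)) :
    ((D : ℚ) - 3) * (∑ s ∈ Finset.Icc 2 k, (facesLen D k σ s : ℚ))
        + (D : ℚ) * ((D : ℚ) + 1) ≤
      2 * ((D : ℚ) + 1) / ((D - 1).factorial : ℚ) * degree D k σ
        + 2 * (facesLen D k σ 1 : ℚ) ∧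
    ∀ s : ℕ, 2 ≤ s → facesLen D k σ s ≠ 0 →
      (s : ℚ) * ((D : ℚ) - 1) + (D : ℚ) * ((D : ℚ) + 1) ≤
        ((D : ℚ) + 1) + 2 * ((D : ℚ) + 1) / ((D - 1).factorial : ℚ) * degree D k σ
          + 2 * (facesLen D k σ 1 : ℚ) := by
  have hfact : ((D - 1).factorial : ℚ) ≠ 0 := by
    exact_mod_cast (D - 1).factorial_ne_zero
  have hD4 : (4 : ℚ) ≤ (D : ℚ) := by exact_mod_cast hD
  set S : ℚ := ∑ s ∈ Finset.Icc 2 k, (facesLen D k σ s : ℚ) with hSdef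
  set T : ℚ := ∑ s ∈ Finset.Icc 2 k, (s : ℚ) * (facesLen D k σ s : ℚ) with hTdef
  set F1 : ℚ := (facesLen D k σ 1 : ℚ) with hF1def
  set Pc : ℕ :=
    (Finset.univ.filter fun p : Fin (D + 1) × Fin (D + 1) => p.1 < p.2).card with hPcdef
  have hFq : (totalFaces D k σ : ℚ) = F1 + S := by
    rw [totalFaces_eq D k σ]; push_cast [hSdef, hF1def]; ring
  have hTq : F1 + T = (k : ℚ) * (Pc : ℚ) := by
    have := weightedFaces_eq D k σ
    have := congrArg (fun n : ℕ => (n : ℚ)) this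
    push_cast at this
    rw [hF1def, hTdef, hPcdef]
    convert this using 2
  have hPq : 2 * (Pc : ℚ) = ((D : ℚ) + 1) * (D : ℚ) := by
    have h := pairs_card (D + 1)
    simp only [Nat.add_sub_cancel] at h
    exact_mod_cast h
  have hdeg : 2 * ((D : ℚ) + 1) / ((D - 1).factorial : ℚ) * degree D k σ
      = ((D : ℚ) + 1) *
        ((D : ℚ) + (D : ℚ) * ((D : ℚ) - 1) / 2 * (k : ℚ) - (totalFaces D k σ : ℚ)) := by
    unfold degree; field_simp
  have hmain : 2 * ((D : ℚ) + 1) / ((D - 1).factorial : ℚ) * degree D k σ + 2 * F1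
      = ((D : ℚ) + 1) * (D : ℚ) + ((D : ℚ) - 1) * T - ((D : ℚ) + 1) * S := by
    rw [hdeg, hFq]
    linear_combination (-((D : ℚ) - 1) * (k : ℚ) / 2) * hPq - ((D : ℚ) - 1) * hTq
  have h2S : 2 * S ≤ T := by
    rw [hSdef, hTdef, Finset.mul_sum]
    apply Finset.sum_le_sum
    intro i hi
    have h2i : (2 : ℚ) ≤ (i : ℚ) := by exact_mod_cast (Finset.mem_Icc.1 hi).1
    exact mul_le_mul_of_nonneg_right h2i (Nat.cast_nonneg _)
  constructor
  · have hmulS : ((D : ℚ) - 1) * (2 * S) ≤ ((D : ℚ) - 1) * T :=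
      mul_le_mul_of_nonneg_left h2S (by linarith)
    nlinarith [hmulS, hmain]
  · intro s hs2 hsne
    have hsk : s ≤ k := by
      by_contra h
      push_neg at h
      exact hsne (Finset.sum_eq_zero fun p _ => numCyclesLen_zero _ h hs2)
    have hs1 : (1 : ℚ) ≤ (facesLen D k σ s : ℚ) := by
      exact_mod_cast Nat.one_le_iff_ne_zero.2 hsne
    have key : ((D : ℚ) - 1) * (s : ℚ) - ((D : ℚ) + 1) ≤ ((D : ℚ) - 1) * T - ((D : ℚ) + 1) * S := by
      have hsum : ((D : ℚ) - 1) * T - ((D : ℚ) + 1) * S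
          = ∑ s' ∈ Finset.Icc 2 k,
              ((((D : ℚ) - 1) * (s' : ℚ) - ((D : ℚ) + 1)) * (facesLen D k σ s' : ℚ)) := by
        rw [hSdef, hTdef, Finset.mul_sum, Finset.mul_sum, ← Finset.sum_sub_distrib]
        apply Finset.sum_congr rfl
        intro s' _
        ring
      rw [hsum]
      have hterm : ∀ s' ∈ Finset.Icc 2 k,
          0 ≤ (((D : ℚ) - 1) * (s' : ℚ) - ((D : ℚ) + 1)) * (facesLen D k σ s' : ℚ) := by
        intro s' hs'
        have h2s' : (2 : ℚ) ≤ (s' : ℚ) := by exact_mod_cast (Finset.mem_Icc.1 hs').1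
        have hc : (0 : ℚ) ≤ ((D : ℚ) - 1) * (s' : ℚ) - ((D : ℚ) + 1) := by nlinarith
        exact mul_nonneg hc (Nat.cast_nonneg _)
      have h2sq : (2 : ℚ) ≤ (s : ℚ) := by exact_mod_cast hs2
      have hc : (0 : ℚ) ≤ ((D : ℚ) - 1) * (s : ℚ) - ((D : ℚ) + 1) := by nlinarith
      calc ((D : ℚ) - 1) * (s : ℚ) - ((D : ℚ) + 1)
          ≤ (((D : ℚ) - 1) * (s : ℚ) - ((D : ℚ) + 1)) * (facesLen D k σ s : ℚ) := by nlinarith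
        _ ≤ _ := Finset.single_le_sum hterm (Finset.mem_Icc.2 ⟨hs2, hsk⟩)
    linarith [hmain, key]
end
end

section
/- Let D ≥ 3, k ≥ 1, let G be a closed bipartite (D+1)-colored graph with 2k vertices, and let G' be the graph obtained from G by insertion of a fundamental melon on the edge of some color c₀ at some black vertex i₀. Then G' has 2(k+1) vertices, its total face count satisfies F(G') = F(G) + D(D−1)/2, its degree is unchanged, ω(G') = ω(G), and G' is connected if and only if G is connected. -/
open scoped Classical

noncomputable section

open Equiv Equiv.Perm Finset

private lemma perm_apply_inv_self' {α : Type*} (f : Equiv.Perm α) (x : α) : f (f⁻¹ x) = x :=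
  Equiv.apply_symm_apply f x

private lemma perm_inv_apply_self' {α : Type*} (f : Equiv.Perm α) (x : α) : f⁻¹ (f x) = x :=
  Equiv.symm_apply_apply f x

private lemma numC_eq {n : ℕ} (g : Equiv.Perm (Fin n)) :
    numCycles g = Multiset.card g.cycleType + (n - g.support.card) := by
  unfold numCycles
  congr 1
  have h : (Finset.univ.filter fun i => g i = i) = g.supportᶜ := by
    ext i; simp [Equiv.Perm.mem_support]
  rw [h, Finset.card_compl, Fintype.card_fin]

private lemma cycle_mul_swap {n : ℕ} {c : Equiv.Perm (Fin n)} (hc : c.IsCycle) {a b : Fin n}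
    (ha : a ∈ c.support) (hb : b ∉ c.support) :
    (c * Equiv.swap a b).IsCycle ∧ (c * Equiv.swap a b).support = insert b c.support := by
  have hab : a ≠ b := fun h => hb (h ▸ ha)
  have ha' : c a ≠ a := mem_support.mp ha
  have hb' : c b = b := notMem_support.mp hb
  have hca : c a ∈ c.support := apply_mem_support.mpr ha
  have hcab : c a ≠ b := fun h => hb (h ▸ hca)
  have heb : (c * Equiv.swap a b) b = c a := by
    simp [Equiv.Perm.mul_apply, Equiv.swap_apply_right]
  have hea : (c * Equiv.swap a b) a = b := by
    simp [Equiv.Perm.mul_apply, Equiv.swap_apply_left, hb']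
  have hey : ∀ y, y ≠ a → y ≠ b → (c * Equiv.swap a b) y = c y := by
    intro y h1 h2; simp [Equiv.Perm.mul_apply, Equiv.swap_apply_of_ne_of_ne h1 h2]
  have hsupp : (c * Equiv.swap a b).support = insert b c.support := by
    ext y
    rcases eq_or_ne y b with rfl | hyb
    · simp [mem_support, heb, hcab]
    rcases eq_or_ne y a with rfl | hya
    · simp [mem_support, hea, hab.symm, ha, Finset.mem_insert]
    · simp [mem_support, hey y hya hyb, Finset.mem_insert, hyb]
  have hK : ∀ i : ℕ, ∃ j : ℕ, ((c * Equiv.swap a b) ^ j) b = (c ^ i) (c a) := by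
    intro i
    induction i with
    | zero => exact ⟨1, by simpa using heb⟩
    | succ i ih =>
      obtain ⟨j, hj⟩ := ih
      by_cases h : (c ^ i) (c a) = a
      · refine ⟨1, ?_⟩
        rw [pow_one, heb, pow_succ', Equiv.Perm.mul_apply, h]
      · have hy : (c ^ i) (c a) ∈ c.support := by
          rw [Equiv.Perm.pow_apply_mem_support]; exact hca
        have hyb : (c ^ i) (c a) ≠ b := fun hh => hb (hh ▸ hy)
        refine ⟨j + 1, ?_⟩
        rw [pow_succ', Equiv.Perm.mul_apply, hj, hey _ h hyb, pow_succ', Equiv.Perm.mul_apply]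
  refine ⟨⟨b, by rw [heb]; exact hcab, ?_⟩, hsupp⟩
  intro y hy
  rcases eq_or_ne y b with rfl | hyb
  · exact Equiv.Perm.SameCycle.refl _ _
  have hy' : y ∈ c.support := by
    have h2 : y ∈ (c * Equiv.swap a b).support := mem_support.mpr hy
    rw [hsupp, Finset.mem_insert] at h2
    tauto
  have hsc : c.SameCycle (c a) y := hc.sameCycle (mem_support.mp hca) (mem_support.mp hy')
  obtain ⟨i, _, hi⟩ := hsc.exists_pow_eq'
  obtain ⟨j, hj⟩ := hK i
  exact ⟨(j : ℤ), by rw [zpow_natCast, hj, hi]⟩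

private lemma numCycles_mul_swap {n : ℕ} (g : Equiv.Perm (Fin n)) {a b : Fin n} (hab : a ≠ b)
    (hb : g b = b) : numCycles (g * Equiv.swap a b) + 1 = numCycles g := by
  by_cases ha : g a = a
  · have hd : g.Disjoint (Equiv.swap a b) := by
      intro x
      by_cases h1 : x = a
      · left; rw [h1, ha]
      by_cases h2 : x = b
      · left; rw [h2, hb]
      right; exact Equiv.swap_apply_of_ne_of_ne h1 h2
    have e1 : Multiset.card (g * Equiv.swap a b).cycleType
        = Multiset.card g.cycleType + 1 := by
      rw [hd.cycleType_mul, Multiset.card_add, (isCycle_swap hab).cycleType]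
      simp
    have e2 : (g * Equiv.swap a b).support.card = g.support.card + 2 := by
      rw [hd.support_mul,
        Finset.card_union_of_disjoint (Equiv.Perm.disjoint_iff_disjoint_support.mp hd),
        Equiv.Perm.card_support_swap hab]
    have e3 : (g * Equiv.swap a b).support.card ≤ n := by
      simpa using Finset.card_le_univ (g * Equiv.swap a b).support
    rw [numC_eq, numC_eq]
    omega
  · have hc : (g.cycleOf a).IsCycle := Equiv.Perm.isCycle_cycleOf g ha
    have hmem : g.cycleOf a ∈ g.cycleFactorsFinset :=
      Equiv.Perm.cycleOf_mem_cycleFactorsFinset_iff.mpr (by rwa [Equiv.Perm.mem_support])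
    have hd : (g * (g.cycleOf a)⁻¹).Disjoint (g.cycleOf a) :=
      Equiv.Perm.disjoint_mul_inv_of_mem_cycleFactorsFinset hmem
    set c := g.cycleOf a with hcdef
    set d := g * c⁻¹ with hddef
    have hg : d * c = g := by rw [hddef, inv_mul_cancel_right]
    have hasupp : a ∈ c.support := by
      rw [Equiv.Perm.mem_support, hcdef, Equiv.Perm.cycleOf_apply_self]; exact ha
    have hbsupp : b ∉ c.support := fun h => by
      have h2 : b ∈ g.support := Equiv.Perm.support_cycleOf_le g a h
      exact (Equiv.Perm.mem_support.mp h2) hb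
    obtain ⟨he, hes⟩ := cycle_mul_swap hc hasupp hbsupp
    have hdb : d b = b := by
      rw [hddef, Equiv.Perm.mul_apply]
      have : c⁻¹ b = b := by
        rw [Equiv.Perm.inv_eq_iff_eq, (Equiv.Perm.notMem_support.mp hbsupp)]
      rw [this, hb]
    have hge : g * Equiv.swap a b = d * (c * Equiv.swap a b) := by
      rw [← mul_assoc, hg]
    have hde : d.Disjoint (c * Equiv.swap a b) := by
      intro x
      by_cases hx : x = b
      · left; rw [hx, hdb]
      rcases hd x with h | h
      · left; exact h
      · right
        have hxs : x ∉ (c * Equiv.swap a b).support := by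
          rw [hes, Finset.mem_insert]
          push_neg
          exact ⟨hx, fun hh => (Equiv.Perm.mem_support.mp hh) h⟩
        exact Equiv.Perm.notMem_support.mp hxs
    have e1 : Multiset.card (g * Equiv.swap a b).cycleType
        = Multiset.card d.cycleType + 1 := by
      rw [hge, hde.cycleType_mul, Multiset.card_add,
        Equiv.Perm.card_cycleType_eq_one.mpr he]
    have e2 : Multiset.card g.cycleType = Multiset.card d.cycleType + 1 := by
      rw [← hg, hd.cycleType_mul, Multiset.card_add, Equiv.Perm.card_cycleType_eq_one.mpr hc]
    have e3 : (g * Equiv.swap a b).support.card = d.support.card + (c.support.card + 1) := by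
      rw [hge, hde.support_mul,
        Finset.card_union_of_disjoint (Equiv.Perm.disjoint_iff_disjoint_support.mp hde),
        hes, Finset.card_insert_of_notMem hbsupp]
    have e4 : g.support.card = d.support.card + c.support.card := by
      rw [← hg, hd.support_mul,
        Finset.card_union_of_disjoint (Equiv.Perm.disjoint_iff_disjoint_support.mp hd)]
    have e5 : (g * Equiv.swap a b).support.card ≤ n := by
      simpa using Finset.card_le_univ (g * Equiv.swap a b).support
    rw [numC_eq, numC_eq]
    omega

private lemma numCycles_extend {m : ℕ} (ρ : Equiv.Perm (Fin m)) (π : Equiv.Perm (Fin (m + 1)))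
    (h1 : ∀ i : Fin m, π i.castSucc = (ρ i).castSucc) (h2 : π (Fin.last m) = Fin.last m) :
    numCycles π = numCycles ρ + 1 := by
  classical
  set f : Fin m ≃ {x : Fin (m + 1) // x ≠ Fin.last m} :=
    { toFun := fun i => ⟨i.castSucc, (Fin.castSucc_lt_last i).ne⟩
      invFun := fun x => x.1.castPred x.2
      left_inv := fun i => by simp
      right_inv := fun x => by simp [Fin.castSucc_castPred] } with hf
  have hπ : π = ρ.extendDomain f := by
    ext x
    cases x using Fin.lastCases with
    | last =>
      rw [h2, Equiv.Perm.extendDomain_apply_not_subtype]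
      simp
    | cast i =>
      have himg := Equiv.Perm.extendDomain_apply_image ρ f i
      have hfi : ((f i : {x : Fin (m + 1) // x ≠ Fin.last m}) : Fin (m + 1)) = i.castSucc := rfl
      have hfρ : ((f (ρ i) : {x : Fin (m + 1) // x ≠ Fin.last m}) : Fin (m + 1))
          = (ρ i).castSucc := rfl
      rw [h1 i, ← hfρ, ← himg, hfi]
  have hct : π.cycleType = ρ.cycleType := by
    rw [hπ]; exact Equiv.Perm.cycleType_extendDomain f
  have hsc : π.support.card = ρ.support.card := by
    rw [hπ]; exact Equiv.Perm.card_support_extend_domain f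
  have hle : ρ.support.card ≤ m := by simpa using Finset.card_le_univ ρ.support
  rw [numC_eq, numC_eq, hct, hsc]
  omega

private lemma numCycles_insert {m : ℕ} (ρ : Equiv.Perm (Fin m)) (π : Equiv.Perm (Fin (m + 1)))
    (i₀ : Fin m) (h1 : π i₀.castSucc = Fin.last m)
    (h2 : π (Fin.last m) = (ρ i₀).castSucc)
    (h3 : ∀ i : Fin m, i ≠ i₀ → π i.castSucc = (ρ i).castSucc) :
    numCycles π = numCycles ρ := by
  set s := Equiv.swap i₀.castSucc (Fin.last m) with hs
  have hne : i₀.castSucc ≠ Fin.last m := (Fin.castSucc_lt_last i₀).ne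
  have hext : numCycles (π * s) = numCycles ρ + 1 := by
    apply numCycles_extend
    · intro i
      by_cases hi : i = i₀
      · subst hi
        rw [Equiv.Perm.mul_apply, hs, Equiv.swap_apply_left, h2]
      · rw [Equiv.Perm.mul_apply, hs,
          Equiv.swap_apply_of_ne_of_ne (by simpa [Fin.castSucc_inj] using hi)
            (Fin.castSucc_lt_last i).ne, h3 i hi]
    · rw [Equiv.Perm.mul_apply, hs, Equiv.swap_apply_right, h1]
  have hswap : numCycles (π * s * s) + 1 = numCycles (π * s) :=
    numCycles_mul_swap (π * s) hne (by rw [Equiv.Perm.mul_apply, hs, Equiv.swap_apply_right, h1])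
  rw [mul_assoc, Equiv.swap_mul_self, mul_one] at hswap
  omega

private lemma card_lt_pairs {α : Type*} [DecidableEq α] [LinearOrder α] (s : Finset α) :
    ((s ×ˢ s).filter fun p => p.1 < p.2).card = s.card * (s.card - 1) / 2 := by
  classical
  set A := (s ×ˢ s).filter fun p => p.1 < p.2 with hA
  set B := (s ×ˢ s).filter fun p => p.2 < p.1 with hB
  have hcard : A.card = B.card := by
    apply Finset.card_nbij' (fun p => p.swap) (fun p => p.swap)
    · intro p hp
      simp only [hA, hB, Finset.coe_filter, Set.mem_setOf_eq, Finset.mem_product, Prod.fst_swap, Prod.snd_swap] at *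
      exact ⟨⟨hp.1.2, hp.1.1⟩, hp.2⟩
    · intro p hp
      simp only [hA, hB, Finset.coe_filter, Set.mem_setOf_eq, Finset.mem_product, Prod.fst_swap, Prod.snd_swap] at *
      exact ⟨⟨hp.1.2, hp.1.1⟩, hp.2⟩
    · intro p _; simp
    · intro p _; simp
  have hunion : A ∪ B = s.offDiag := by
    ext p
    simp only [hA, hB, Finset.mem_union, Finset.mem_filter, Finset.mem_product,
      Finset.mem_offDiag]
    constructor
    · rintro (⟨⟨ha1, ha2⟩, h⟩ | ⟨⟨ha1, ha2⟩, h⟩)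
      · exact ⟨ha1, ha2, h.ne⟩
      · exact ⟨ha1, ha2, h.ne'⟩
    · rintro ⟨h1, h2, h3⟩
      rcases h3.lt_or_gt with h | h
      · exact Or.inl ⟨⟨h1, h2⟩, h⟩
      · exact Or.inr ⟨⟨h1, h2⟩, h⟩
  have hdisj : Disjoint A B := by
    rw [Finset.disjoint_left]
    intro p hpA hpB
    simp only [hA, hB, Finset.mem_filter] at hpA hpB
    exact absurd hpB.2 (lt_asymm hpA.2)
  have hsum : A.card + B.card = s.card * s.card - s.card := by
    rw [← Finset.card_union_of_disjoint hdisj, hunion, Finset.offDiag_card]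
  have hmul : s.card * (s.card - 1) = s.card * s.card - s.card := by
    rcases Nat.eq_zero_or_pos s.card with h | h
    · simp [h]
    · obtain ⟨m, hm⟩ : ∃ m, s.card = m + 1 := ⟨s.card - 1, by omega⟩
      rw [hm]
      have h1 : (m + 1) * (m + 1 - 1) = (m + 1) * m := by norm_num
      have h2 : (m + 1) * (m + 1) = (m + 1) * m + (m + 1) := by ring
      omega
  omega

private lemma conn_iff {D m : ℕ} (μ : Fin (D + 1) → Equiv.Perm (Fin m)) (i j : Fin m) :
    (∃ g ∈ Subgroup.closure
        {g : Equiv.Perm (Fin m) | ∃ c c' : Fin (D + 1), g = (μ c')⁻¹ * μ c}, g i = j) ↔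
    Relation.EqvGen (fun a b => ∃ c c' : Fin (D + 1), ((μ c')⁻¹ * μ c) a = b) i j := by
  constructor
  · rintro ⟨g, hg, rfl⟩
    refine Subgroup.closure_induction
      (p := fun g _ => ∀ a : Fin m,
        Relation.EqvGen (fun a b => ∃ c c' : Fin (D + 1), ((μ c')⁻¹ * μ c) a = b) a (g a))
      ?_ ?_ ?_ ?_ hg i
    · rintro x ⟨c, c', rfl⟩ a
      exact Relation.EqvGen.rel _ _ ⟨c, c', rfl⟩
    · intro a; exact Relation.EqvGen.refl a
    · intro x y hx hy px py a
      have h1 := py a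
      have h2 := px (y a)
      have h3 : (x * y) a = x (y a) := rfl
      rw [h3]
      exact Relation.EqvGen.trans _ _ _ h1 h2
    · intro x hx px a
      have h := px (x⁻¹ a)
      rw [perm_apply_inv_self'] at h
      exact Relation.EqvGen.symm _ _ h
  · intro h
    induction h with
    | rel a b hab =>
      obtain ⟨c, c', hcc⟩ := hab
      exact ⟨_, Subgroup.subset_closure ⟨c, c', rfl⟩, hcc⟩
    | refl a => exact ⟨1, Subgroup.one_mem _, rfl⟩
    | symm a b _ ih =>
      obtain ⟨g, hg, hga⟩ := ih
      exact ⟨g⁻¹, Subgroup.inv_mem _ hg, by rw [← hga, perm_inv_apply_self']⟩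
    | trans a b c _ _ ih1 ih2 =>
      obtain ⟨g, hg, h1⟩ := ih1
      obtain ⟨g', hg', h2⟩ := ih2
      exact ⟨g' * g, Subgroup.mul_mem _ hg' hg, by rw [Equiv.Perm.mul_apply, h1, h2]⟩

/-- Let `G'` (encoded by `τ` on `Fin (k+1)`, hence with `2(k+1)` vertices)
be obtained from `G` (encoded by `σ` on `Fin k`) by insertion of a fundamental melon on the
edge of color `c₀` at the black vertex `i₀`: for `c ≠ c₀` the permutation `τ c` agrees with
`σ c` on `Fin k` and fixes the new point, while `τ c₀` sends `i₀` to the new point, the new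
point to `σ c₀ i₀`, and agrees with `σ c₀` elsewhere.  Then `F(G') = F(G) + D(D−1)/2`,
`ω(G') = ω(G)`, and `G'` is connected iff `G` is. -/
theorem melon_insertion_invariants (D k : ℕ) (hD : 3 ≤ D) (hk : 1 ≤ k)
    (σ : Fin (D + 1) → Equiv.Perm (Fin k)) (c₀ : Fin (D + 1)) (i₀ : Fin k)
    (τ : Fin (D + 1) → Equiv.Perm (Fin (k + 1)))
    (hne : ∀ c : Fin (D + 1), c ≠ c₀ →
      (∀ i : Fin k, τ c i.castSucc = (σ c i).castSucc) ∧ τ c (Fin.last k) = Fin.last k)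
    (h₁ : τ c₀ i₀.castSucc = Fin.last k)
    (h₂ : τ c₀ (Fin.last k) = (σ c₀ i₀).castSucc)
    (h₃ : ∀ i : Fin k, i ≠ i₀ → τ c₀ i.castSucc = (σ c₀ i).castSucc) :
    totalFaces D (k + 1) τ = totalFaces D k σ + D * (D - 1) / 2 ∧
    degree D (k + 1) τ = degree D k σ ∧
    (Connected D (k + 1) τ ↔ Connected D k σ) := by
  classical
  have hinv : ∀ c : Fin (D + 1), c ≠ c₀ → ∀ y : Fin k,
      (τ c)⁻¹ y.castSucc = ((σ c)⁻¹ y).castSucc := by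
    intro c hc y
    rw [Equiv.Perm.inv_eq_iff_eq, (hne c hc).1, perm_apply_inv_self']
  have hinvlast : ∀ c : Fin (D + 1), c ≠ c₀ → (τ c)⁻¹ (Fin.last k) = Fin.last k := by
    intro c hc; rw [Equiv.Perm.inv_eq_iff_eq, (hne c hc).2]
  have hinv0a : (τ c₀)⁻¹ (Fin.last k) = i₀.castSucc := by
    rw [Equiv.Perm.inv_eq_iff_eq, h₁]
  have hinv0b : (τ c₀)⁻¹ ((σ c₀ i₀).castSucc) = Fin.last k := by
    rw [Equiv.Perm.inv_eq_iff_eq, h₂]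
  have hinv0c : ∀ y : Fin k, y ≠ σ c₀ i₀ →
      (τ c₀)⁻¹ y.castSucc = ((σ c₀)⁻¹ y).castSucc := by
    intro y hy
    have hyi : (σ c₀)⁻¹ y ≠ i₀ := by
      intro hh
      exact hy (by rw [← hh, perm_apply_inv_self'])
    rw [Equiv.Perm.inv_eq_iff_eq, h₃ _ hyi, perm_apply_inv_self']
  have hface : ∀ c₁ c₂ : Fin (D + 1), c₁ ≠ c₂ →
      faceCount D (k + 1) τ c₁ c₂
        = faceCount D k σ c₁ c₂ + (if c₁ ≠ c₀ ∧ c₂ ≠ c₀ then 1 else 0) := by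
    intro c₁ c₂ hcc
    by_cases e1 : c₁ = c₀
    · have e2 : c₂ ≠ c₀ := fun h => hcc (e1.trans h.symm)
      have key : faceCount D (k + 1) τ c₁ c₂ = faceCount D k σ c₁ c₂ := by
        subst e1
        unfold faceCount
        apply numCycles_insert _ _ i₀
        · rw [Equiv.Perm.mul_apply, h₁, hinvlast c₂ e2]
        · rw [Equiv.Perm.mul_apply, h₂, hinv c₂ e2]; rfl
        · intro i hi; rw [Equiv.Perm.mul_apply, h₃ i hi, hinv c₂ e2]; rfl
      rw [key]
      simp [e1]
    by_cases e2 : c₂ = c₀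
    · have key : faceCount D (k + 1) τ c₁ c₂ = faceCount D k σ c₁ c₂ := by
        subst e2
        unfold faceCount
        set ρ : Equiv.Perm (Fin k) := (σ c₂)⁻¹ * σ c₁ with hρ
        have h0 : ρ (ρ⁻¹ i₀) = i₀ := perm_apply_inv_self' ρ i₀
        have hj : σ c₁ (ρ⁻¹ i₀) = σ c₂ i₀ := by
          have hx : σ c₂ (ρ (ρ⁻¹ i₀)) = σ c₂ i₀ := by rw [h0]
          rwa [hρ, Equiv.Perm.mul_apply, perm_apply_inv_self'] at hx
        apply numCycles_insert ρ _ (ρ⁻¹ i₀)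
        · rw [Equiv.Perm.mul_apply, (hne c₁ e1).1, hj, hinv0b]
        · rw [Equiv.Perm.mul_apply, (hne c₁ e1).2, hinv0a, h0]
        · intro i hi
          have hσi : σ c₁ i ≠ σ c₂ i₀ := by
            intro hh
            exact hi ((σ c₁).injective (by rw [hh, hj]))
          rw [Equiv.Perm.mul_apply, (hne c₁ e1).1, hinv0c _ hσi]; rfl
      rw [key]
      simp [e2]
    · have key : faceCount D (k + 1) τ c₁ c₂ = faceCount D k σ c₁ c₂ + 1 := by
        unfold faceCount
        apply numCycles_extend
        · intro i; rw [Equiv.Perm.mul_apply, (hne c₁ e1).1, hinv c₂ e2]; rfl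
        · rw [Equiv.Perm.mul_apply, (hne c₁ e1).2, hinvlast c₂ e2]
      rw [key, if_pos ⟨e1, e2⟩]
  have hcard : ((Finset.univ.filter (fun p : Fin (D + 1) × Fin (D + 1) => p.1 < p.2)).filter
      fun p => p.1 ≠ c₀ ∧ p.2 ≠ c₀).card = D * (D - 1) / 2 := by
    have hset : ((Finset.univ.filter (fun p : Fin (D + 1) × Fin (D + 1) => p.1 < p.2)).filter
        fun p => p.1 ≠ c₀ ∧ p.2 ≠ c₀)
        = ((Finset.univ.erase c₀) ×ˢ (Finset.univ.erase c₀)).filter fun p => p.1 < p.2 := by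
      ext p
      simp only [Finset.mem_filter, Finset.mem_univ, true_and, Finset.mem_product,
        Finset.mem_erase, and_true]
      tauto
    rw [hset, card_lt_pairs, Finset.card_erase_of_mem (Finset.mem_univ _), Finset.card_univ,
      Fintype.card_fin, Nat.add_sub_cancel]
  have hTF : totalFaces D (k + 1) τ = totalFaces D k σ + D * (D - 1) / 2 := by
    unfold totalFaces
    rw [Finset.sum_congr rfl (fun (p : Fin (D + 1) × Fin (D + 1)) hp => hface p.1 p.2 (Finset.mem_filter.mp hp).2.ne)]
    rw [Finset.sum_add_distrib]
    congr 1
    rw [Finset.sum_boole, Nat.cast_id, ← hcard]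
  have hq : ((D * (D - 1) / 2 : ℕ) : ℚ) = (D : ℚ) * ((D : ℚ) - 1) / 2 := by
    have hdvd : 2 ∣ D * (D - 1) := by
      have h := Nat.even_mul_succ_self (D - 1)
      have hD1 : D - 1 + 1 = D := by omega
      rw [hD1] at h
      have h2 := h.two_dvd
      rwa [Nat.mul_comm] at h2
    rw [Nat.cast_div hdvd (by norm_num), Nat.cast_mul, Nat.cast_sub (by omega : 1 ≤ D)]
    norm_num
  have hdeg : degree D (k + 1) τ = degree D k σ := by
    unfold degree
    rw [hTF]
    push_cast [hq]
    ring
  refine ⟨hTF, hdeg, ?_⟩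
  obtain ⟨cx, hcx⟩ : ∃ c : Fin (D + 1), c ≠ c₀ := by
    rcases eq_or_ne c₀ (⟨0, by omega⟩ : Fin (D + 1)) with h | h
    · refine ⟨⟨1, by omega⟩, ?_⟩
      rw [h]; intro hh
      exact absurd (congrArg Fin.val hh) (by simp)
    · exact ⟨⟨0, by omega⟩, fun hh => h hh.symm⟩
  have hlast : Relation.EqvGen
      (fun a b => ∃ c c' : Fin (D + 1), ((τ c')⁻¹ * τ c) a = b) i₀.castSucc (Fin.last k) :=
    Relation.EqvGen.rel _ _ ⟨c₀, cx, by rw [Equiv.Perm.mul_apply, h₁, hinvlast cx hcx]⟩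
  have hcast : ∀ a b : Fin k,
      Relation.EqvGen (fun a b => ∃ c c' : Fin (D + 1), ((σ c')⁻¹ * σ c) a = b) a b →
      Relation.EqvGen (fun a b => ∃ c c' : Fin (D + 1), ((τ c')⁻¹ * τ c) a = b)
        a.castSucc b.castSucc := by
    intro a b h
    induction h with
    | rel a b hab =>
      obtain ⟨c, c', hab⟩ := hab
      subst hab
      by_cases hc : c = c₀ <;> by_cases hc' : c' = c₀
      · rw [hc, hc']
        have hv : ((σ c₀)⁻¹ * σ c₀) a = a := by
          rw [Equiv.Perm.mul_apply, perm_inv_apply_self']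
        rw [hv]
        exact Relation.EqvGen.refl _
      · rw [hc]
        by_cases hi : a = i₀
        · rw [hi]
          exact Relation.EqvGen.trans _ _ _
            (Relation.EqvGen.rel _ _
              ⟨c₀, c', by rw [Equiv.Perm.mul_apply, h₁, hinvlast c' hc']⟩)
            (Relation.EqvGen.rel _ _
              ⟨c₀, c', by rw [Equiv.Perm.mul_apply, h₂, hinv c' hc']; rfl⟩)
        · exact Relation.EqvGen.rel _ _
            ⟨c₀, c', by rw [Equiv.Perm.mul_apply, h₃ a hi, hinv c' hc']; rfl⟩
      · rw [hc']
        by_cases hσa : σ c a = σ c₀ i₀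
        · have hb : ((σ c₀)⁻¹ * σ c) a = i₀ := by
            rw [Equiv.Perm.mul_apply, hσa, perm_inv_apply_self']
          rw [hb]
          exact Relation.EqvGen.trans _ _ _
            (Relation.EqvGen.rel _ _
              ⟨c, c₀, by rw [Equiv.Perm.mul_apply, (hne c hc).1, hσa, hinv0b]⟩)
            (Relation.EqvGen.symm _ _ hlast)
        · exact Relation.EqvGen.rel _ _
            ⟨c, c₀, by rw [Equiv.Perm.mul_apply, (hne c hc).1, hinv0c _ hσa]; rfl⟩
      · exact Relation.EqvGen.rel _ _
          ⟨c, c', by rw [Equiv.Perm.mul_apply, (hne c hc).1, hinv c' hc']; rfl⟩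
    | refl a => exact Relation.EqvGen.refl _
    | symm a b h ih => exact Relation.EqvGen.symm _ _ ih
    | trans a b c h1 h2 ih1 ih2 => exact Relation.EqvGen.trans _ _ _ ih1 ih2
  have hproj : ∀ x y : Fin (k + 1),
      Relation.EqvGen (fun a b => ∃ c c' : Fin (D + 1), ((τ c')⁻¹ * τ c) a = b) x y →
      Relation.EqvGen (fun a b => ∃ c c' : Fin (D + 1), ((σ c')⁻¹ * σ c) a = b)
        (Fin.lastCases i₀ (fun i => i) x) (Fin.lastCases i₀ (fun i => i) y) := by
    intro x y h
    induction h with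
    | rel x y hab =>
      obtain ⟨c, c', hab⟩ := hab
      subst hab
      cases x using Fin.lastCases with
      | last =>
        by_cases hc : c = c₀ <;> by_cases hc' : c' = c₀
        · rw [hc, hc']
          have hv : ((τ c₀)⁻¹ * τ c₀) (Fin.last k) = Fin.last k := by
            rw [Equiv.Perm.mul_apply, perm_inv_apply_self']
          rw [hv]
          exact Relation.EqvGen.refl _
        · rw [hc]
          have hv : ((τ c')⁻¹ * τ c₀) (Fin.last k) = ((σ c')⁻¹ (σ c₀ i₀)).castSucc := by
            rw [Equiv.Perm.mul_apply, h₂, hinv c' hc']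
          rw [hv]
          simp only [Fin.lastCases_last, Fin.lastCases_castSucc]
          exact Relation.EqvGen.rel _ _ ⟨c₀, c', rfl⟩
        · rw [hc']
          have hv : ((τ c₀)⁻¹ * τ c) (Fin.last k) = i₀.castSucc := by
            rw [Equiv.Perm.mul_apply, (hne c hc).2, hinv0a]
          rw [hv]
          simp only [Fin.lastCases_last, Fin.lastCases_castSucc]
          exact Relation.EqvGen.refl _
        · have hv : ((τ c')⁻¹ * τ c) (Fin.last k) = Fin.last k := by
            rw [Equiv.Perm.mul_apply, (hne c hc).2, hinvlast c' hc']
          rw [hv]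
          exact Relation.EqvGen.refl _
      | cast i =>
        by_cases hc : c = c₀ <;> by_cases hc' : c' = c₀
        · rw [hc, hc']
          have hv : ((τ c₀)⁻¹ * τ c₀) i.castSucc = i.castSucc := by
            rw [Equiv.Perm.mul_apply, perm_inv_apply_self']
          rw [hv]
          exact Relation.EqvGen.refl _
        · rw [hc]
          by_cases hi : i = i₀
          · rw [hi]
            have hv : ((τ c')⁻¹ * τ c₀) i₀.castSucc = Fin.last k := by
              rw [Equiv.Perm.mul_apply, h₁, hinvlast c' hc']
            rw [hv]
            simp only [Fin.lastCases_last, Fin.lastCases_castSucc]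
            exact Relation.EqvGen.refl _
          · have hv : ((τ c')⁻¹ * τ c₀) i.castSucc = ((σ c')⁻¹ (σ c₀ i)).castSucc := by
              rw [Equiv.Perm.mul_apply, h₃ i hi, hinv c' hc']
            rw [hv]
            simp only [Fin.lastCases_castSucc]
            exact Relation.EqvGen.rel _ _ ⟨c₀, c', rfl⟩
        · rw [hc']
          by_cases hσa : σ c i = σ c₀ i₀
          · have hv : ((τ c₀)⁻¹ * τ c) i.castSucc = Fin.last k := by
              rw [Equiv.Perm.mul_apply, (hne c hc).1, hσa, hinv0b]
            rw [hv]
            simp only [Fin.lastCases_last, Fin.lastCases_castSucc]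
            exact Relation.EqvGen.rel _ _
              ⟨c, c₀, by rw [Equiv.Perm.mul_apply, hσa, perm_inv_apply_self']⟩
          · have hv : ((τ c₀)⁻¹ * τ c) i.castSucc = ((σ c₀)⁻¹ (σ c i)).castSucc := by
              rw [Equiv.Perm.mul_apply, (hne c hc).1, hinv0c _ hσa]
            rw [hv]
            simp only [Fin.lastCases_castSucc]
            exact Relation.EqvGen.rel _ _ ⟨c, c₀, rfl⟩
        · have hv : ((τ c')⁻¹ * τ c) i.castSucc = ((σ c')⁻¹ (σ c i)).castSucc := by
            rw [Equiv.Perm.mul_apply, (hne c hc).1, hinv c' hc']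
          rw [hv]
          simp only [Fin.lastCases_castSucc]
          exact Relation.EqvGen.rel _ _ ⟨c, c', rfl⟩
    | refl x => exact Relation.EqvGen.refl _
    | symm x y h ih => exact Relation.EqvGen.symm _ _ ih
    | trans x y z h1 h2 ih1 ih2 => exact Relation.EqvGen.trans _ _ _ ih1 ih2
  constructor
  · intro h i j
    rw [conn_iff]
    have h2 := (conn_iff τ i.castSucc j.castSucc).mp (h i.castSucc j.castSucc)
    have h3 := hproj _ _ h2
    simpa using h3
  · intro h x y
    rw [conn_iff]
    cases x using Fin.lastCases with
    | last =>
      cases y using Fin.lastCases with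
      | last => exact Relation.EqvGen.refl _
      | cast j =>
        exact Relation.EqvGen.trans _ _ _ (Relation.EqvGen.symm _ _ hlast)
          (hcast _ _ ((conn_iff σ i₀ j).mp (h i₀ j)))
    | cast i =>
      cases y using Fin.lastCases with
      | last =>
        exact Relation.EqvGen.trans _ _ _
          (hcast _ _ ((conn_iff σ i i₀).mp (h i i₀))) hlast
      | cast j => exact hcast _ _ ((conn_iff σ i j).mp (h i j))
end
end

section
/- Let D ≥ 3, k ≥ 1, and let G be a connected closed bipartite (D+1)-colored graph with 2k vertices of degree zero, ω(G) = 0. Then all the D! jackets of G are planar: for every (D+1)-cycle π on the color set, g_π(G) = 0, i.e. Φ_π(G) = 2 + (D−1)·k. -/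
open scoped Classical

noncomputable section

namespace Aux
open Equiv Equiv.Perm
variable {k : ℕ}

theorem _root_.Equiv.Perm.apply_inv_self {α : Type*} (f : Perm α) (x : α) : f (f⁻¹ x) = x :=
  f.apply_symm_apply x

theorem _root_.Equiv.Perm.inv_apply_self {α : Type*} (f : Perm α) (x : α) : f⁻¹ (f x) = x :=
  f.symm_apply_apply x

def scs (g : Perm (Fin k)) : Setoid (Fin k) :=
  ⟨g.SameCycle, ⟨Perm.SameCycle.refl g, Perm.SameCycle.symm, Perm.SameCycle.trans⟩⟩

def cyc (g : Perm (Fin k)) : ℕ := Fintype.card (Quotient (scs g))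

lemma scs_iff {g : Perm (Fin k)} {x y : Fin k} :
    (⟦x⟧ : Quotient (scs g)) = ⟦y⟧ ↔ g.SameCycle x y := by
  rw [Quotient.eq]; rfl

lemma sc_fixed {g : Perm (Fin k)} {x y : Fin k} (hx : g x = x) (h : g.SameCycle x y) :
    y = x := by
  obtain ⟨n, rfl⟩ := h
  exact Perm.zpow_apply_eq_self_of_apply_eq_self hx n

lemma cyc_eq_numCycles (g : Perm (Fin k)) : numCycles g = cyc g := by
  classical
  have hpt : ∀ c ∈ g.cycleFactorsFinset, c.support.Nonempty := fun c hc =>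
    (Perm.mem_cycleFactorsFinset_iff.mp hc).1.nonempty_support
  let pt : ∀ c ∈ g.cycleFactorsFinset, Fin k := fun c hc => (hpt c hc).choose
  have hptmem : ∀ c hc, pt c hc ∈ Perm.support c := fun c hc => (hpt c hc).choose_spec
  have hmoved : ∀ (c : Perm (Fin k)) (hc : c ∈ g.cycleFactorsFinset),
      g (pt c hc) ≠ pt c hc := by
    intro c hc
    have := Perm.mem_cycleFactorsFinset_support_le hc (hptmem c hc)
    exact Perm.mem_support.mp this
  have hcyceq : ∀ (c) (hc : c ∈ g.cycleFactorsFinset), g.cycleOf (pt c hc) = c :=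
    fun c hc => (Perm.cycle_is_cycleOf (hptmem c hc) hc).symm
  let f : ({x : Fin k // g x = x} ⊕ {c : Perm (Fin k) // c ∈ g.cycleFactorsFinset}) →
      Quotient (scs g) := fun z =>
    match z with
    | .inl x => ⟦x.1⟧
    | .inr c => ⟦pt c.1 c.2⟧
  have hbij : Function.Bijective f := by
    constructor
    · rintro (⟨x, hx⟩ | ⟨c, hc⟩) (⟨y, hy⟩ | ⟨d, hd⟩) h <;> simp only [f, scs_iff] at h
      · simp [sc_fixed hx h]
      · exact absurd (sc_fixed hx h) (fun he => hmoved d hd (by rw [he]; exact hx))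
      · exact absurd (sc_fixed hy h.symm) (fun he => hmoved c hc (by rw [he]; exact hy))
      · have : g.cycleOf (pt c hc) = g.cycleOf (pt d hd) := Perm.SameCycle.cycleOf_eq h
        rw [hcyceq c hc, hcyceq d hd] at this
        simp [this]
    · intro q
      obtain ⟨x, rfl⟩ := Quotient.exists_rep q
      by_cases hx : g x = x
      · exact ⟨.inl ⟨x, hx⟩, rfl⟩
      · have hcf : g.cycleOf x ∈ g.cycleFactorsFinset :=
          Perm.cycleOf_mem_cycleFactorsFinset_iff.mpr (Perm.mem_support.mpr hx)
        refine ⟨.inr ⟨g.cycleOf x, hcf⟩, ?_⟩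
        simp only [f, scs_iff]
        have := hptmem _ hcf
        rw [Perm.mem_support_cycleOf_iff] at this
        exact this.1.symm
  have hcard := Fintype.card_of_bijective hbij
  rw [cyc, ← hcard, Fintype.card_sum, numCycles]
  have h1 : Multiset.card g.cycleType = Fintype.card { c // c ∈ g.cycleFactorsFinset } := by
    rw [Perm.cycleType_def, Multiset.card_map, Fintype.card_coe]
    rfl
  have h2 : (Finset.univ.filter fun i => g i = i).card = Fintype.card { x : Fin k // g x = x } := by
    rw [Fintype.card_subtype]
  omega

lemma exists_pow_nat {g : Perm (Fin k)} {x y : Fin k} (h : g.SameCycle x y) :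
    ∃ n : ℕ, (g ^ n) x = y := by
  obtain ⟨i, _, h⟩ := h.exists_pow_eq'
  exact ⟨i, h⟩

lemma sc_of_pow {g : Perm (Fin k)} {x y : Fin k} {n : ℕ} (h : (g ^ n) x = y) :
    g.SameCycle x y := ⟨n, by rwa [zpow_natCast]⟩

lemma traj (g : Perm (Fin k)) (a b : Fin k) :
    ∀ n (x : Fin k), (∀ m < n, (g ^ (m + 1)) x ≠ a ∧ (g ^ (m + 1)) x ≠ b) →
      ((Equiv.swap a b * g) ^ n) x = (g ^ n) x := by
  intro n
  induction n with
  | zero => simp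
  | succ n ih =>
    intro x hx
    have h1 : (∀ m < n, (g ^ (m + 1)) x ≠ a ∧ (g ^ (m + 1)) x ≠ b) :=
      fun m hm => hx m (by omega)
    have h2 := hx n (by omega)
    rw [pow_succ', Perm.mul_apply, ih x h1, Perm.mul_apply]
    rw [show g ((g ^ n) x) = (g ^ (n + 1)) x from by rw [pow_succ', Perm.mul_apply]]
    exact Equiv.swap_apply_of_ne_of_ne h2.1 h2.2

lemma T2 {g : Perm (Fin k)} {a b u : Fin k} (hab : ¬ g.SameCycle a b)
    (h : g.SameCycle a u) : (Equiv.swap a b * g).SameCycle a u := by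
  classical
  have hP : ∃ n : ℕ, (g ^ n) a = u := exists_pow_nat h
  set n := Nat.find hP with hndef
  have hPn : (g ^ n) a = u := Nat.find_spec hP
  have key : ∀ m < n, (g ^ (m + 1)) a ≠ a ∧ (g ^ (m + 1)) a ≠ b := by
    intro m hm
    constructor
    · intro he
      have h1 : (g ^ (n - (m + 1))) a = u := by
        rw [← hPn, show n = (n - (m + 1)) + (m + 1) from by omega, pow_add,
          Perm.mul_apply, he, Nat.add_sub_cancel]
      exact Nat.find_min hP (show n - (m+1) < n by omega) h1
    · exact fun he => hab (sc_of_pow he)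
  exact sc_of_pow (by rw [traj g a b n a key, hPn])

lemma merge_sc {g : Perm (Fin k)} {a b : Fin k} (hab : ¬ g.SameCycle a b)
    {x y : Fin k} (hxy : g.SameCycle x y) : (Equiv.swap a b * g).SameCycle x y := by
  by_cases hxa : g.SameCycle x a
  · exact ((T2 hab hxa.symm).symm).trans (T2 hab (hxa.symm.trans hxy))
  by_cases hxb : g.SameCycle x b
  · have hba : ¬ g.SameCycle b a := fun h => hab h.symm
    rw [Equiv.swap_comm]
    exact ((T2 hba hxb.symm).symm).trans (T2 hba (hxb.symm.trans hxy))
  · obtain ⟨n, hn⟩ := exists_pow_nat hxy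
    have key : ∀ m < n, (g ^ (m + 1)) x ≠ a ∧ (g ^ (m + 1)) x ≠ b := by
      intro m _
      exact ⟨fun he => hxa (sc_of_pow he), fun he => hxb (sc_of_pow he)⟩
    exact sc_of_pow (by rw [traj g a b n x key, hn])

lemma merge_ab {g : Perm (Fin k)} {a b : Fin k} (hab : ¬ g.SameCycle a b) :
    (Equiv.swap a b * g).SameCycle a b := by
  have hv : g.SameCycle a (g⁻¹ a) := ⟨-1, by simp⟩
  have h1 := T2 hab hv
  have h2 : (Equiv.swap a b * g) (g⁻¹ a) = b := by
    rw [Perm.mul_apply, Equiv.Perm.apply_inv_self, Equiv.swap_apply_left]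
  exact h1.trans (sc_of_pow (n := 1) (by rwa [pow_one]))

lemma R1 {g : Perm (Fin k)} {a b x y : Fin k} (h : (Equiv.swap a b * g).SameCycle x y) :
    g.SameCycle x y ∨ ((g.SameCycle x a ∨ g.SameCycle x b) ∧
      (g.SameCycle y a ∨ g.SameCycle y b)) := by
  obtain ⟨n, hn⟩ := exists_pow_nat h
  rw [← hn]; clear hn h
  induction n with
  | zero => exact Or.inl (by simp; exact Perm.SameCycle.refl g x)
  | succ n ih =>
    set z := ((Equiv.swap a b * g) ^ n) x with hz
    have hstep : ((Equiv.swap a b * g) ^ (n + 1)) x = Equiv.swap a b (g z) := by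
      rw [pow_succ', Perm.mul_apply, Perm.mul_apply]
    rw [hstep]
    have hzgz : g.SameCycle z (g z) := sc_of_pow (n := 1) (by rw [pow_one])
    by_cases h1 : g z = a
    · have hza : g.SameCycle z a := h1 ▸ hzgz
      rw [h1, Equiv.swap_apply_left]
      rcases ih with h | ⟨hx, _⟩
      · exact Or.inr ⟨Or.inl (h.trans hza), Or.inr (Perm.SameCycle.refl g b)⟩
      · exact Or.inr ⟨hx, Or.inr (Perm.SameCycle.refl g b)⟩
    by_cases h2 : g z = b
    · have hzb : g.SameCycle z b := h2 ▸ hzgz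
      rw [h2, Equiv.swap_apply_right]
      rcases ih with h | ⟨hx, _⟩
      · exact Or.inr ⟨Or.inr (h.trans hzb), Or.inl (Perm.SameCycle.refl g a)⟩
      · exact Or.inr ⟨hx, Or.inl (Perm.SameCycle.refl g a)⟩
    · rw [Equiv.swap_apply_of_ne_of_ne h1 h2]
      rcases ih with h | ⟨hx, hz'⟩
      · exact Or.inl (h.trans hzgz)
      · refine Or.inr ⟨hx, ?_⟩
        rcases hz' with h | h
        · exact Or.inl (hzgz.symm.trans h)
        · exact Or.inr (hzgz.symm.trans h)

lemma split_not_sc {g : Perm (Fin k)} {a b : Fin k} (hab : g.SameCycle a b) (hne : a ≠ b) :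
    ¬ (Equiv.swap a b * g).SameCycle a b := by
  classical
  have hP : ∃ n : ℕ, 0 < n ∧ (g ^ n) a = b := by
    obtain ⟨n, hn⟩ := exists_pow_nat hab
    refine ⟨n, ?_, hn⟩
    rcases Nat.eq_zero_or_pos n with h | h
    · subst h; simp at hn; exact absurd hn hne
    · exact h
  set m := Nat.find hP with hmdef
  have hm : 0 < m ∧ (g ^ m) a = b := Nat.find_spec hP
  have orbit : ∀ n : ℕ, ∃ j, j < m ∧ ((Equiv.swap a b * g) ^ n) a = (g ^ j) a := by
    intro n
    induction n with
    | zero => exact ⟨0, hm.1, by simp⟩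
    | succ n ih =>
      obtain ⟨j, hj, hz⟩ := ih
      have hstep : ((Equiv.swap a b * g) ^ (n + 1)) a = Equiv.swap a b ((g ^ (j + 1)) a) := by
        rw [pow_succ', Perm.mul_apply, hz, Perm.mul_apply]
        congr 1
        rw [pow_succ', Perm.mul_apply]
      by_cases hja : j + 1 = m
      · refine ⟨0, hm.1, ?_⟩
        rw [hstep, hja, hm.2, Equiv.swap_apply_right, pow_zero, Perm.one_apply]
      · have hj1 : j + 1 < m := by omega
        have hne1 : (g ^ (j + 1)) a ≠ b := fun he => Nat.find_min hP hj1 ⟨by omega, he⟩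
        have hne2 : (g ^ (j + 1)) a ≠ a := by
          intro he
          refine Nat.find_min hP (show m - (j + 1) < m by omega) ⟨by omega, ?_⟩
          rw [← hm.2, show m = (m - (j + 1)) + (j + 1) from by omega, pow_add,
            Perm.mul_apply, he, Nat.add_sub_cancel]
        exact ⟨j + 1, hj1, by rw [hstep, Equiv.swap_apply_of_ne_of_ne hne2 hne1]⟩
  intro hcon
  obtain ⟨n, hn⟩ := exists_pow_nat hcon
  obtain ⟨j, hj, hz⟩ := orbit n
  have hjb : (g ^ j) a = b := by rw [← hz, hn]
  have hj0 : 0 < j := by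
    rcases Nat.eq_zero_or_pos j with h | h
    · subst h; simp at hjb; exact absurd hjb hne
    · exact h
  exact Nat.find_min hP hj ⟨hj0, hjb⟩


lemma card_le_of_almost_inj {α β : Type*} [Fintype α] [Fintype β] (f : α → β) (u v : α)
    (h : ∀ x y, f x = f y → x = y ∨ ((x = u ∨ x = v) ∧ (y = u ∨ y = v))) :
    Fintype.card α ≤ Fintype.card β + 1 := by
  classical
  have h1 : (Finset.univ.erase v).card ≤ (Finset.univ : Finset β).card := by
    apply Finset.card_le_card_of_injOn f (fun _ _ => Finset.mem_univ _)
    intro x hx y hy hxy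
    rcases h x y hxy with h' | ⟨hx', hy'⟩
    · exact h'
    · have hxv : x ≠ v := Finset.ne_of_mem_erase hx
      have hyv : y ≠ v := Finset.ne_of_mem_erase hy
      rcases hx' with rfl | rfl
      · rcases hy' with rfl | rfl
        · rfl
        · exact absurd rfl hyv
      · exact absurd rfl hxv
  have h2 : (Finset.univ.erase v).card = Fintype.card α - 1 := by
    rw [Finset.card_erase_of_mem (Finset.mem_univ v), Finset.card_univ]
  have h3 : 0 < Fintype.card α := Fintype.card_pos_iff.mpr ⟨u⟩
  rw [Finset.card_univ] at h1
  omega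

lemma card_le_of_surj_collapse {α β : Type*} [Fintype α] [Fintype β] (f : α → β)
    (hs : Function.Surjective f) (u v : α) (huv : u ≠ v) (hf : f u = f v) :
    Fintype.card β + 1 ≤ Fintype.card α := by
  classical
  have h1 : (Finset.univ : Finset β).card ≤ (Finset.univ.erase v).card := by
    apply Finset.card_le_card_of_surjOn f
    intro b _
    obtain ⟨x, hx⟩ := hs b
    by_cases hxv : x = v
    · exact ⟨u, by simp [huv], by rw [hf, ← hxv, hx]⟩
    · exact ⟨x, by simp [hxv], hx⟩
  have h2 : (Finset.univ.erase v).card = Fintype.card α - 1 := by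
    rw [Finset.card_erase_of_mem (Finset.mem_univ v), Finset.card_univ]
  have h3 : 0 < Fintype.card α := Fintype.card_pos_iff.mpr ⟨u⟩
  rw [Finset.card_univ] at h1
  omega

lemma cyc_merge {g : Perm (Fin k)} {a b : Fin k} (hne : a ≠ b) (hab : ¬ g.SameCycle a b) :
    cyc (Equiv.swap a b * g) + 1 = cyc g := by
  let f : Quotient (scs g) → Quotient (scs (Equiv.swap a b * g)) :=
    Quotient.map id (fun x y h => merge_sc hab h)
  have hfmk : ∀ x : Fin k, f ⟦x⟧ = ⟦x⟧ := fun x => rfl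
  have hsurj : Function.Surjective f := by
    intro q
    obtain ⟨x, rfl⟩ := Quotient.exists_rep q
    exact ⟨⟦x⟧, rfl⟩
  have hcol : f ⟦a⟧ = f ⟦b⟧ := by
    rw [hfmk, hfmk]
    exact Quotient.sound (merge_ab hab)
  have hne' : (⟦a⟧ : Quotient (scs g)) ≠ ⟦b⟧ := fun h => hab (Quotient.exact h)
  have h1 : cyc (Equiv.swap a b * g) + 1 ≤ cyc g :=
    card_le_of_surj_collapse f hsurj ⟦a⟧ ⟦b⟧ hne' hcol
  have h2 : cyc g ≤ cyc (Equiv.swap a b * g) + 1 := by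
    apply card_le_of_almost_inj f ⟦a⟧ ⟦b⟧
    intro X Y
    induction X using Quotient.inductionOn with | h x =>
    induction Y using Quotient.inductionOn with | h y =>
    intro hXY
    rw [hfmk, hfmk] at hXY
    rcases R1 (Quotient.exact hXY : (Equiv.swap a b * g).SameCycle x y) with h | ⟨hx, hy⟩
    · exact Or.inl (Quotient.sound h)
    · refine Or.inr ⟨?_, ?_⟩
      · rcases hx with h | h
        · exact Or.inl (Quotient.sound h)
        · exact Or.inr (Quotient.sound h)
      · rcases hy with h | h
        · exact Or.inl (Quotient.sound h)
        · exact Or.inr (Quotient.sound h)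
  omega

lemma cyc_split {g : Perm (Fin k)} {a b : Fin k} (hab : g.SameCycle a b) (hne : a ≠ b) :
    cyc (Equiv.swap a b * g) = cyc g + 1 := by
  have h2 := split_not_sc hab hne
  have h3 := cyc_merge hne h2
  rw [← mul_assoc, Equiv.swap_mul_self, one_mul] at h3
  omega

lemma cyc_mul_swap_le {g : Perm (Fin k)} {a b : Fin k} (hne : a ≠ b) :
    cyc (Equiv.swap a b * g) ≤ cyc g + 1 := by
  by_cases hab : g.SameCycle a b
  · rw [cyc_split hab hne]
  · have := cyc_merge hne hab
    omega

lemma cyc_swap_apply {τ : Perm (Fin k)} {x : Fin k} (hx : τ x ≠ x) :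
    cyc (Equiv.swap x (τ x) * τ) = cyc τ + 1 := by
  have hfix : (Equiv.swap x (τ x) * τ) x = x := by
    rw [Perm.mul_apply, Equiv.swap_apply_right]
  have hnsc : ¬ (Equiv.swap x (τ x) * τ).SameCycle x (τ x) := fun h => hx (sc_fixed hfix h)
  have h := cyc_merge (g := Equiv.swap x (τ x) * τ) (fun h => hx h.symm) hnsc
  rw [← mul_assoc, Equiv.swap_mul_self, one_mul] at h
  omega

lemma cyc_one : cyc (1 : Perm (Fin k)) = k := by
  rw [← cyc_eq_numCycles, numCycles, Perm.cycleType_one]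
  simp

lemma exists_swap_factors : ∀ τ : Perm (Fin k), ∃ L : List (Perm (Fin k)),
    (∀ s ∈ L, ∃ a b : Fin k, a ≠ b ∧ s = Equiv.swap a b) ∧ L.prod = τ ∧
      L.length + cyc τ = k := by
  suffices H : ∀ (n : ℕ) (τ : Perm (Fin k)), τ.support.card = n → ∃ L : List (Perm (Fin k)),
      (∀ s ∈ L, ∃ a b : Fin k, a ≠ b ∧ s = Equiv.swap a b) ∧ L.prod = τ ∧
      L.length + cyc τ = k from fun τ => H _ τ rfl
  intro n
  induction n using Nat.strong_induction_on with
  | _ n ih =>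
    intro τ hn
    by_cases h1 : τ = 1
    · subst h1
      exact ⟨[], by simp, by simp, by simp [cyc_one]⟩
    · have hx : ∃ x, τ x ≠ x := by
        by_contra hc
        push_neg at hc
        exact h1 (Equiv.ext hc)
      obtain ⟨x, hx⟩ := hx
      have hcard : (Equiv.swap x (τ x) * τ).support.card < n :=
        hn ▸ Perm.card_support_swap_mul hx
      obtain ⟨L, hL, hprod, hlen⟩ := ih _ hcard (Equiv.swap x (τ x) * τ) rfl
      refine ⟨Equiv.swap x (τ x) :: L, ?_, ?_, ?_⟩
      · intro s hs
        rcases List.mem_cons.mp hs with rfl | hs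
        · exact ⟨x, τ x, fun h => hx h.symm, rfl⟩
        · exact hL s hs
      · rw [List.prod_cons, hprod, ← mul_assoc, Equiv.swap_mul_self, one_mul]
      · have := cyc_swap_apply hx
        simp only [List.length_cons]
        omega


def lrel (L : List (Perm (Fin k))) : Fin k → Fin k → Prop :=
  Relation.EqvGen (fun x y => ∃ s ∈ L, s x = y)

def lsetoid (L : List (Perm (Fin k))) : Setoid (Fin k) :=
  Relation.EqvGen.setoid (fun x y => ∃ s ∈ L, s x = y)

lemma lsetoid_iff {L : List (Perm (Fin k))} {x y : Fin k} :
    (⟦x⟧ : Quotient (lsetoid L)) = ⟦y⟧ ↔ lrel L x y := by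
  rw [Quotient.eq]; rfl

def oL (L : List (Perm (Fin k))) : ℕ := Fintype.card (Quotient (lsetoid L))

lemma lrel_refl (L : List (Perm (Fin k))) (x : Fin k) : lrel L x x :=
  Relation.EqvGen.refl x

lemma lrel_base {L : List (Perm (Fin k))} {s : Perm (Fin k)} (hs : s ∈ L) (x : Fin k) :
    lrel L x (s x) := Relation.EqvGen.rel _ _ ⟨s, hs, rfl⟩

lemma lrel_mono {L : List (Perm (Fin k))} {t : Perm (Fin k)} {x y : Fin k}
    (h : lrel L x y) : lrel (t :: L) x y :=
  Relation.EqvGen.mono (r := fun x y => ∃ s ∈ L, s x = y) (p := fun x y => ∃ s ∈ t :: L, s x = y)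
    (fun a b ⟨s, h1, h2⟩ => ⟨s, List.mem_cons_of_mem _ h1, h2⟩) x y h

lemma lrel_prod_of_mem {L M : List (Perm (Fin k))} (h : ∀ s ∈ M, s ∈ L) (x : Fin k) :
    lrel L x (M.prod x) := by
  induction M generalizing x with
  | nil => simpa using lrel_refl L x
  | cons t M ih =>
    have h1 : lrel L x (M.prod x) := ih (fun s hs => h s (List.mem_cons_of_mem _ hs)) x
    have h2 : lrel L (M.prod x) (t (M.prod x)) := lrel_base (h t (List.mem_cons_self)) _
    rw [List.prod_cons, Perm.mul_apply]
    exact Relation.EqvGen.trans _ _ _ h1 h2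

lemma lrel_pow (L : List (Perm (Fin k))) : ∀ (n : ℕ) (x : Fin k),
    lrel L x ((L.prod ^ n) x) := by
  intro n
  induction n with
  | zero => intro x; simpa using lrel_refl L x
  | succ n ih =>
    intro x
    rw [pow_succ', Perm.mul_apply]
    exact Relation.EqvGen.trans _ _ _ (ih x) (lrel_prod_of_mem (fun s hs => hs) _)

lemma lrel_of_sameCycle {L : List (Perm (Fin k))} {x y : Fin k}
    (h : L.prod.SameCycle x y) : lrel L x y := by
  obtain ⟨n, hn⟩ := exists_pow_nat h
  rw [← hn]
  exact lrel_pow L n x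

lemma lrel_cons_of_rel {L : List (Perm (Fin k))} {a b : Fin k} (hab : lrel L a b)
    {x y : Fin k} (h : lrel (Equiv.swap a b :: L) x y) : lrel L x y := by
  induction h with
  | rel x y hxy =>
    obtain ⟨s, hs, he⟩ := hxy
    rcases List.mem_cons.mp hs with rfl | hs
    · by_cases hxa : x = a
      · subst hxa
        rw [Equiv.swap_apply_left] at he
        rwa [← he]
      by_cases hxb : x = b
      · subst hxb
        rw [Equiv.swap_apply_right] at he
        rw [← he]
        exact Relation.EqvGen.symm _ _ hab
      · rw [Equiv.swap_apply_of_ne_of_ne hxa hxb] at he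
        rw [← he]
        exact lrel_refl L x
    · exact Relation.EqvGen.rel _ _ ⟨s, hs, he⟩
  | refl x => exact lrel_refl L x
  | symm x y _ ih => exact Relation.EqvGen.symm _ _ ih
  | trans x y z _ _ ih1 ih2 => exact Relation.EqvGen.trans _ _ _ ih1 ih2

lemma lrel_cons_cases {L : List (Perm (Fin k))} {a b x y : Fin k}
    (h : lrel (Equiv.swap a b :: L) x y) :
    lrel L x y ∨ ((lrel L x a ∨ lrel L x b) ∧ (lrel L y a ∨ lrel L y b)) := by
  induction h with
  | rel u v huv =>
    obtain ⟨s, hs, he⟩ := huv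
    rcases List.mem_cons.mp hs with rfl | hs
    · by_cases hua : u = a
      · refine Or.inr ⟨Or.inl ?_, Or.inr ?_⟩
        · rw [hua]; exact lrel_refl L a
        · rw [← he, hua, Equiv.swap_apply_left]; exact lrel_refl L b
      by_cases hub : u = b
      · refine Or.inr ⟨Or.inr ?_, Or.inl ?_⟩
        · rw [hub]; exact lrel_refl L b
        · rw [← he, hub, Equiv.swap_apply_right]; exact lrel_refl L a
      · left; rw [← he, Equiv.swap_apply_of_ne_of_ne hua hub]; exact lrel_refl L u
    · exact Or.inl (Relation.EqvGen.rel _ _ ⟨s, hs, he⟩)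
  | refl x => exact Or.inl (lrel_refl L x)
  | symm x y _ ih =>
    rcases ih with h | ⟨h1, h2⟩
    · exact Or.inl (Relation.EqvGen.symm _ _ h)
    · exact Or.inr ⟨h2, h1⟩
  | trans x y z _ _ ih1 ih2 =>
    rcases ih1 with h1 | ⟨h1a, h1b⟩
    · rcases ih2 with h2 | ⟨h2a, h2b⟩
      · exact Or.inl (Relation.EqvGen.trans _ _ _ h1 h2)
      · refine Or.inr ⟨?_, h2b⟩
        rcases h2a with h | h
        · exact Or.inl (Relation.EqvGen.trans _ _ _ h1 h)
        · exact Or.inr (Relation.EqvGen.trans _ _ _ h1 h)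
    · rcases ih2 with h2 | ⟨h2a, h2b⟩
      · refine Or.inr ⟨h1a, ?_⟩
        rcases h1b with h | h
        · exact Or.inl (Relation.EqvGen.trans _ _ _ (Relation.EqvGen.symm _ _ h2) h)
        · exact Or.inr (Relation.EqvGen.trans _ _ _ (Relation.EqvGen.symm _ _ h2) h)
      · exact Or.inr ⟨h1a, h2b⟩

lemma oL_cons_ge (L : List (Perm (Fin k))) (a b : Fin k) :
    oL L ≤ oL (Equiv.swap a b :: L) + 1 := by
  let f : Quotient (lsetoid L) → Quotient (lsetoid (Equiv.swap a b :: L)) :=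
    Quotient.map id (fun x y h => lrel_mono h)
  have hfmk : ∀ x : Fin k, f ⟦x⟧ = ⟦x⟧ := fun x => rfl
  apply card_le_of_almost_inj f ⟦a⟧ ⟦b⟧
  intro X Y
  induction X using Quotient.inductionOn with | h x =>
  induction Y using Quotient.inductionOn with | h y =>
  intro hXY
  rw [hfmk, hfmk] at hXY
  rcases lrel_cons_cases (Quotient.exact hXY : lrel (Equiv.swap a b :: L) x y) with
    h | ⟨hx, hy⟩
  · exact Or.inl (Quotient.sound h)
  · refine Or.inr ⟨?_, ?_⟩
    · rcases hx with h | h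
      · exact Or.inl (Quotient.sound h)
      · exact Or.inr (Quotient.sound h)
    · rcases hy with h | h
      · exact Or.inl (Quotient.sound h)
      · exact Or.inr (Quotient.sound h)

lemma oL_cons_ge_of_rel {L : List (Perm (Fin k))} {a b : Fin k} (hab : lrel L a b) :
    oL L ≤ oL (Equiv.swap a b :: L) := by
  let f : Quotient (lsetoid L) → Quotient (lsetoid (Equiv.swap a b :: L)) :=
    Quotient.map id (fun x y h => lrel_mono h)
  apply Fintype.card_le_of_injective f
  intro X Y
  induction X using Quotient.inductionOn with | h x =>
  induction Y using Quotient.inductionOn with | h y =>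
  intro hXY
  exact Quotient.sound (lrel_cons_of_rel hab (Quotient.exact hXY))

lemma oL_nil : oL ([] : List (Perm (Fin k))) = k := by
  have hinj : Function.Bijective (fun x : Fin k => (⟦x⟧ : Quotient (lsetoid []))) := by
    constructor
    · intro x y h
      have h2 : lrel [] x y := Quotient.exact h
      clear h
      induction h2 with
      | rel x y hxy => obtain ⟨s, hs, _⟩ := hxy; simp at hs
      | refl x => rfl
      | symm x y _ ih => exact ih.symm
      | trans x y z _ _ ih1 ih2 => exact ih1.trans ih2
    · intro q
      obtain ⟨x, rfl⟩ := Quotient.exists_rep q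
      exact ⟨x, rfl⟩
  rw [oL, ← Fintype.card_of_bijective hinj, Fintype.card_fin]

lemma swap_list_bound : ∀ L : List (Perm (Fin k)),
    (∀ s ∈ L, ∃ a b : Fin k, a ≠ b ∧ s = Equiv.swap a b) →
    k + cyc L.prod ≤ L.length + 2 * oL L := by
  intro L
  induction L with
  | nil =>
    intro _
    simp [oL_nil, cyc_one]
    omega
  | cons s L ih =>
    intro hS
    obtain ⟨a, b, hne, rfl⟩ := hS s (List.mem_cons_self)
    have ihL := ih (fun t ht => hS t (List.mem_cons_of_mem _ ht))
    rw [List.prod_cons]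
    by_cases hab : lrel L a b
    · have h1 : cyc (Equiv.swap a b * L.prod) ≤ cyc L.prod + 1 := cyc_mul_swap_le hne
      have h2 : oL L ≤ oL (Equiv.swap a b :: L) := oL_cons_ge_of_rel hab
      simp only [List.length_cons]
      omega
    · have hsc : ¬ L.prod.SameCycle a b := fun h => hab (lrel_of_sameCycle h)
      have h1 : cyc (Equiv.swap a b * L.prod) + 1 = cyc L.prod := cyc_merge hne hsc
      have h2 : oL L ≤ oL (Equiv.swap a b :: L) + 1 := oL_cons_ge L a b
      simp only [List.length_cons]
      omega


lemma jacket_bound {D k : ℕ} (σ : Fin (D + 1) → Perm (Fin k)) (hconn : Connected D k σ)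
    (f : ℕ → Fin (D + 1)) (hf0 : f (D + 1) = f 0)
    (hsurj : ∀ c : Fin (D + 1), ∃ q < D + 1, f q = c) :
    (∑ q ∈ Finset.range (D + 1), faceCount D k σ (f q) (f (q + 1))) + 2 * k
      ≤ (D + 1) * k + 2 := by
  classical
  set t : ℕ → Perm (Fin k) := fun q => (σ (f (q + 1)))⁻¹ * σ (f q) with ht
  have hLq : ∀ q : ℕ, ∃ L : List (Perm (Fin k)),
      (∀ s ∈ L, ∃ a b : Fin k, a ≠ b ∧ s = Equiv.swap a b) ∧ L.prod = t q ∧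
      L.length + cyc (t q) = k := fun q => exists_swap_factors (t q)
  choose Lq hq1 hq2 hq3 using hLq
  set BL : ℕ → List (Perm (Fin k)) := fun n => Nat.rec [] (fun q acc => Lq q ++ acc) n
    with hBL
  have hBLsucc : ∀ n, BL (n + 1) = Lq n ++ BL n := fun n => rfl
  have hBLprod : ∀ n, (BL n).prod = (σ (f n))⁻¹ * σ (f 0) := by
    intro n
    induction n with
    | zero => simp [hBL]
    | succ n ih =>
      rw [hBLsucc, List.prod_append, ih, hq2]
      simp [ht, mul_assoc]
  have hBLlen : ∀ n, (BL n).length + ∑ q ∈ Finset.range n, cyc (t q) = n * k := by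
    intro n
    induction n with
    | zero => simp [hBL]
    | succ n ih =>
      rw [hBLsucc, List.length_append, Finset.sum_range_succ]
      have := hq3 n
      have h2 : (n + 1) * k = n * k + k := by ring
      omega
  have hBLswap : ∀ n, ∀ s ∈ BL n, ∃ a b : Fin k, a ≠ b ∧ s = Equiv.swap a b := by
    intro n
    induction n with
    | zero => simp [hBL]
    | succ n ih =>
      intro s hs
      rw [hBLsucc] at hs
      rcases List.mem_append.mp hs with hs | hs
      · exact hq1 n s hs
      · exact ih s hs
  have hBLsub : ∀ n, ∀ q < n, ∀ s ∈ Lq q, s ∈ BL n := by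
    intro n
    induction n with
    | zero => omega
    | succ n ih =>
      intro q hq s hs
      rw [hBLsucc, List.mem_append]
      rcases Nat.lt_succ_iff_lt_or_eq.mp hq with h | rfl
      · exact Or.inr (ih q h s hs)
      · exact Or.inl hs
  set L := BL (D + 1) with hLdef
  have hprod1 : L.prod = 1 := by
    rw [hLdef, hBLprod (D + 1), hf0, inv_mul_cancel]
  have hstep : ∀ q < D + 1, ∀ x : Fin k, lrel L x (t q x) := by
    intro q hq x
    have := lrel_prod_of_mem (hBLsub (D + 1) q hq) x
    rwa [hq2 q] at this
  have hA : ∀ j i, i ≤ j → j ≤ D + 1 → ∀ x : Fin k,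
      lrel L x (((σ (f j))⁻¹ * σ (f i)) x) := by
    intro j
    induction j with
    | zero =>
      intro i hi _ x
      have : i = 0 := by omega
      subst this
      rw [Perm.mul_apply, Perm.inv_apply_self]
      exact lrel_refl L x
    | succ j ihj =>
      intro i hi hj x
      rcases Nat.eq_or_lt_of_le hi with rfl | hlt
      · rw [Perm.mul_apply, Perm.inv_apply_self]
        exact lrel_refl L x
      · have hij : i ≤ j := by omega
        have h1 := ihj i hij (by omega) x
        have h2 := hstep j (by omega) (((σ (f j))⁻¹ * σ (f i)) x)
        have he : t j (((σ (f j))⁻¹ * σ (f i)) x) = ((σ (f (j + 1)))⁻¹ * σ (f i)) x := by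
          simp [ht, Perm.mul_apply]
        rw [he] at h2
        exact Relation.EqvGen.trans _ _ _ h1 h2
  have hgen : ∀ g ∈ {g : Perm (Fin k) | ∃ c c' : Fin (D + 1), g = (σ c')⁻¹ * σ c},
      ∀ x : Fin k, lrel L x (g x) := by
    rintro g ⟨c, c', rfl⟩ x
    obtain ⟨i, hi, rfl⟩ := hsurj c
    obtain ⟨j, hj, rfl⟩ := hsurj c'
    rcases le_or_gt i j with hij | hij
    · exact hA j i hij (by omega) x
    · have h1 := hA i j (le_of_lt hij) (by omega) ((((σ (f j))⁻¹ * σ (f i))) x)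
      have he : ((σ (f i))⁻¹ * σ (f j)) ((((σ (f j))⁻¹ * σ (f i))) x) = x := by
        simp [Perm.mul_apply]
      rw [he] at h1
      exact Relation.EqvGen.symm _ _ h1
  have hcl : ∀ g ∈ Subgroup.closure
      {g : Perm (Fin k) | ∃ c c' : Fin (D + 1), g = (σ c')⁻¹ * σ c},
      ∀ x : Fin k, lrel L x (g x) := by
    intro g hg
    refine Subgroup.closure_induction
      (p := fun g _ => ∀ x : Fin k, lrel L x (g x)) (fun g hgs => hgen g hgs)
      ?_ ?_ ?_ hg
    · intro x
      simp only [Perm.one_apply]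
      exact lrel_refl L x
    · intro p q _ _ hp hq x
      rw [Perm.mul_apply]
      exact Relation.EqvGen.trans _ _ _ (hq x) (hp (q x))
    · intro p _ hp x
      have := hp (p⁻¹ x)
      rw [Perm.apply_inv_self] at this
      exact Relation.EqvGen.symm _ _ this
  have hrelall : ∀ x y : Fin k, lrel L x y := by
    intro x y
    obtain ⟨g, hg, hgx⟩ := hconn x y
    have := hcl g hg x
    rwa [hgx] at this
  have hoL : oL L ≤ 1 := by
    apply Fintype.card_le_one_iff.mpr
    intro q1 q2
    induction q1 using Quotient.inductionOn with | h x =>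
    induction q2 using Quotient.inductionOn with | h y =>
    exact Quotient.sound (hrelall x y)
  have hkey := swap_list_bound L (hBLswap (D + 1))
  rw [hprod1, cyc_one] at hkey
  have hlen := hBLlen (D + 1)
  rw [← hLdef] at hlen
  have hface : ∀ q, faceCount D k σ (f q) (f (q + 1)) = cyc (t q) := by
    intro q
    rw [faceCount, cyc_eq_numCycles]
  rw [Finset.sum_congr rfl (fun q _ => hface q)]
  omega

lemma exists_map_two {β : Type*} [DecidableEq β] {x y x' y' : β}
    (hxy : x ≠ y) (hxy' : x' ≠ y') : ∃ μ : Perm β, μ x = x' ∧ μ y = y' := by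
  set s1 := Equiv.swap x x' with hs1
  by_cases h : s1 y = y'
  · exact ⟨s1, Equiv.swap_apply_left x x', h⟩
  · refine ⟨Equiv.swap (s1 y) y' * s1, ?_, ?_⟩
    · rw [Perm.mul_apply, Equiv.swap_apply_left]
      apply Equiv.swap_apply_of_ne_of_ne
      · intro he
        apply hxy
        have h2 : s1 x' = s1 (s1 y) := by rw [← he]
        rw [Equiv.swap_apply_self] at h2
        rw [hs1, Equiv.swap_apply_right] at h2
        exact h2
      · exact hxy'
    · rw [Perm.mul_apply, Equiv.swap_apply_left]


lemma fiber_const2 {β : Type*} [Fintype β] [DecidableEq β] {a b x y a' b' x' y' : β}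
    (h1 : a ≠ b) (h2 : x ≠ y) (h3 : a' ≠ b') (h4 : x' ≠ y') :
    (Finset.univ.filter fun ρ : Perm β => ρ a = x ∧ ρ b = y).card
      = (Finset.univ.filter fun ρ : Perm β => ρ a' = x' ∧ ρ b' = y').card := by
  obtain ⟨μ, hμ1, hμ2⟩ := exists_map_two h2 h4
  obtain ⟨ν, hν1, hν2⟩ := exists_map_two h3 h1
  apply Finset.card_nbij' (fun ρ => μ * ρ * ν) (fun ρ => μ⁻¹ * ρ * ν⁻¹)
  · intro ρ hρ
    simp only [Finset.mem_coe, Finset.mem_filter, Finset.mem_univ, true_and] at hρ ⊢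
    rw [Perm.mul_apply, Perm.mul_apply, hν1, hρ.1, hμ1,
      Perm.mul_apply, Perm.mul_apply, hν2, hρ.2, hμ2]
    exact ⟨rfl, rfl⟩
  · intro ρ hρ
    simp only [Finset.mem_coe, Finset.mem_filter, Finset.mem_univ, true_and] at hρ ⊢
    have hν1' : ν⁻¹ a = a' := by rw [← hν1, Perm.inv_apply_self]
    have hν2' : ν⁻¹ b = b' := by rw [← hν2, Perm.inv_apply_self]
    have hμ1' : μ⁻¹ x' = x := by rw [← hμ1, Perm.inv_apply_self]
    have hμ2' : μ⁻¹ y' = y := by rw [← hμ2, Perm.inv_apply_self]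
    rw [Perm.mul_apply, Perm.mul_apply, hν1', hρ.1, hμ1',
      Perm.mul_apply, Perm.mul_apply, hν2', hρ.2, hμ2']
    exact ⟨rfl, rfl⟩
  · intro ρ _
    group
  · intro ρ _
    group

lemma numCycles_inv (g : Perm (Fin k)) : numCycles g⁻¹ = numCycles g := by
  unfold numCycles
  rw [Perm.cycleType_inv]
  congr 2
  ext i
  simp only [Finset.mem_filter, Finset.mem_univ, true_and]
  constructor
  · intro h
    conv_lhs => rw [← h]
    rw [Perm.apply_inv_self]
  · intro h
    conv_lhs => rw [← h]
    rw [Perm.inv_apply_self]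

lemma faceCount_symm (D k : ℕ) (σ : Fin (D + 1) → Perm (Fin k)) (c₁ c₂ : Fin (D + 1)) :
    faceCount D k σ c₁ c₂ = faceCount D k σ c₂ c₁ := by
  unfold faceCount
  rw [show (σ c₂)⁻¹ * σ c₁ = ((σ c₁)⁻¹ * σ c₂)⁻¹ by rw [mul_inv_rev, inv_inv]]
  exact numCycles_inv _

lemma offDiag_sum (D k : ℕ) (σ : Fin (D + 1) → Perm (Fin k)) :
    ∑ p ∈ (Finset.univ : Finset (Fin (D + 1))).offDiag, faceCount D k σ p.1 p.2
      = 2 * totalFaces D k σ := by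
  classical
  have hsplit : (Finset.univ : Finset (Fin (D + 1))).offDiag
      = (Finset.univ.filter fun p : Fin (D + 1) × Fin (D + 1) => p.1 < p.2)
        ∪ (Finset.univ.filter fun p : Fin (D + 1) × Fin (D + 1) => p.2 < p.1) := by
    ext p
    simp only [Finset.mem_offDiag, Finset.mem_union, Finset.mem_filter, Finset.mem_univ,
      true_and]
    constructor
    · intro h
      exact lt_or_gt_of_ne h
    · rintro (h | h)
      · exact ne_of_lt h
      · exact (ne_of_lt h).symm
  have hdisj : Disjoint
      (Finset.univ.filter fun p : Fin (D + 1) × Fin (D + 1) => p.1 < p.2)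
      (Finset.univ.filter fun p : Fin (D + 1) × Fin (D + 1) => p.2 < p.1) := by
    rw [Finset.disjoint_filter]
    intro p _ h1 h2
    exact absurd h1 (not_lt_of_gt h2)
  rw [hsplit, Finset.sum_union hdisj]
  have hswap : ∑ p ∈ (Finset.univ.filter
        fun p : Fin (D + 1) × Fin (D + 1) => p.2 < p.1), faceCount D k σ p.1 p.2
      = ∑ p ∈ (Finset.univ.filter
        fun p : Fin (D + 1) × Fin (D + 1) => p.1 < p.2), faceCount D k σ p.1 p.2 := by
    apply Finset.sum_nbij' (fun p => (p.2, p.1)) (fun p => (p.2, p.1))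
    · intro p hp
      simp only [Finset.mem_filter, Finset.mem_univ, true_and] at hp ⊢
      exact hp
    · intro p hp
      simp only [Finset.mem_filter, Finset.mem_univ, true_and] at hp ⊢
      exact hp
    · intro p _; rfl
    · intro p _; rfl
    · intro p _
      exact faceCount_symm D k σ p.1 p.2
  rw [hswap, totalFaces, two_mul]


lemma sum_perm_faceCount {D k : ℕ} (σ : Fin (D + 1) → Perm (Fin k)) {a b : Fin (D + 1)}
    (hab : a ≠ b) (h01 : (0 : Fin (D + 1)) ≠ 1) :
    ∑ ρ : Perm (Fin (D + 1)), faceCount D k σ (ρ a) (ρ b)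
      = (Finset.univ.filter fun ρ : Perm (Fin (D + 1)) => ρ 0 = 0 ∧ ρ 1 = 1).card
        * ∑ p ∈ (Finset.univ : Finset (Fin (D + 1))).offDiag, faceCount D k σ p.1 p.2 := by
  classical
  have hcomp := Finset.sum_comp (s := (Finset.univ : Finset (Perm (Fin (D + 1)))))
    (fun p : Fin (D + 1) × Fin (D + 1) => faceCount D k σ p.1 p.2)
    (fun ρ : Perm (Fin (D + 1)) => (ρ a, ρ b))
  have himage : (Finset.univ.image fun ρ : Perm (Fin (D + 1)) => (ρ a, ρ b))
      = (Finset.univ : Finset (Fin (D + 1))).offDiag := by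
    ext p
    simp only [Finset.mem_image, Finset.mem_univ, true_and, Finset.mem_offDiag]
    constructor
    · rintro ⟨ρ, rfl⟩
      exact fun h => hab (ρ.injective h)
    · intro hp
      obtain ⟨μ, hμ1, hμ2⟩ := exists_map_two hab hp
      exact ⟨μ, by rw [hμ1, hμ2]⟩
  rw [himage] at hcomp
  rw [hcomp]
  rw [Finset.mul_sum]
  apply Finset.sum_congr rfl
  intro p hp
  have hpne : p.1 ≠ p.2 := (Finset.mem_offDiag.mp hp).2.2
  have hfib : (Finset.univ.filter fun ρ : Perm (Fin (D + 1)) => (ρ a, ρ b) = p).card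
      = (Finset.univ.filter fun ρ : Perm (Fin (D + 1)) => ρ 0 = 0 ∧ ρ 1 = 1).card := by
    have hfe : (Finset.univ.filter fun ρ : Perm (Fin (D + 1)) => (ρ a, ρ b) = p)
        = (Finset.univ.filter fun ρ : Perm (Fin (D + 1)) => ρ a = p.1 ∧ ρ b = p.2) := by
      ext ρ; simp [Prod.ext_iff]
    rw [hfe]
    exact fiber_const2 hab hpne h01 h01
  rw [smul_eq_mul, hfib]

lemma perm_card_fib {D : ℕ} (h01 : (0 : Fin (D + 1)) ≠ 1) :
    (Finset.univ : Finset (Perm (Fin (D + 1)))).card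
      = (Finset.univ.filter fun ρ : Perm (Fin (D + 1)) => ρ 0 = 0 ∧ ρ 1 = 1).card
        * ((D + 1) * D) := by
  classical
  have hmaps : ∀ ρ ∈ (Finset.univ : Finset (Perm (Fin (D + 1)))),
      (ρ 0, ρ 1) ∈ (Finset.univ : Finset (Fin (D + 1))).offDiag := by
    intro ρ _
    exact Finset.mem_offDiag.mpr ⟨Finset.mem_univ _, Finset.mem_univ _,
      fun h => h01 (ρ.injective h)⟩
  have hpart := Finset.card_eq_sum_card_fiberwise hmaps
  have hconst : ∀ p ∈ (Finset.univ : Finset (Fin (D + 1))).offDiag,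
      (Finset.univ.filter fun ρ : Perm (Fin (D + 1)) => (ρ 0, ρ 1) = p).card
      = (Finset.univ.filter fun ρ : Perm (Fin (D + 1)) => ρ 0 = 0 ∧ ρ 1 = 1).card := by
    intro p hp
    have hpne : p.1 ≠ p.2 := (Finset.mem_offDiag.mp hp).2.2
    have hfe : (Finset.univ.filter fun ρ : Perm (Fin (D + 1)) => (ρ 0, ρ 1) = p)
        = (Finset.univ.filter fun ρ : Perm (Fin (D + 1)) => ρ 0 = p.1 ∧ ρ 1 = p.2) := by
      ext ρ; simp [Prod.ext_iff]
    rw [hfe]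
    exact fiber_const2 h01 hpne h01 h01
  rw [hpart, Finset.sum_congr rfl hconst, Finset.sum_const, smul_eq_mul, Finset.offDiag_card,
    Finset.card_univ, Fintype.card_fin]
  have he : (D + 1) * (D + 1) - (D + 1) = (D + 1) * D := by
    have : (D + 1) * (D + 1) = (D + 1) * D + (D + 1) := by ring
    omega
  rw [he, mul_comm]

end Aux


/-- For a connected closed bipartite `(D+1)`-colored graph with `2k`
vertices of degree zero, all the jackets are planar: for every `(D+1)`-cycle `π` on the
colors, `g_π(G) = 0`, i.e. `Φ_π(G) = 2 + (D−1)·k`. -/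
theorem degree_zero_jackets_planar (D k : ℕ) (hD : 3 ≤ D) (hk : 1 ≤ k)
    (σ : Fin (D + 1) → Equiv.Perm (Fin k)) (hconn : Connected D k σ)
    (hω : degree D k σ = 0) :
    ∀ π : Equiv.Perm (Fin (D + 1)), IsFullCycle π →
      jacketGenus D k σ π = 0 ∧ jacketFaces D k σ π = 2 + (D - 1) * k := by
  classical
  intro π hπ
  obtain ⟨hcyc, hsupp⟩ := hπ
  have h01 : (0 : Fin (D + 1)) ≠ 1 := by
    intro h
    have h2 := congrArg Fin.val h
    have h3 : ((1 : Fin (D + 1)) : ℕ) = 1 % (D + 1) := Fin.val_one' (D + 1)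
    have h4 : 1 % (D + 1) = 1 := Nat.mod_eq_of_lt (by omega)
    simp [h3, h4] at h2
  have hmove : ∀ z : Fin (D + 1), π z ≠ z := fun z =>
    Equiv.Perm.mem_support.mp (hsupp ▸ Finset.mem_univ z)
  have horder : orderOf π = D + 1 := by
    rw [hcyc.orderOf, hsupp, Finset.card_univ, Fintype.card_fin]
  have hpow : π ^ (D + 1) = 1 := by
    have h := pow_orderOf_eq_one π
    rwa [horder] at h
  have hsurjpow : ∀ c : Fin (D + 1), ∃ q < D + 1, (π ^ q) 0 = c := by
    intro c
    obtain ⟨x0, hx0, hx⟩ := hcyc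
    have hsc : π.SameCycle 0 c := ((hx (hmove 0)).symm.trans (hx (hmove c)))
    obtain ⟨i, hi, he⟩ := hsc.exists_pow_eq'
    exact ⟨i, horder ▸ hi, he⟩
  set Ψ : Equiv.Perm (Fin (D + 1)) → ℕ := fun ρ =>
    ∑ q ∈ Finset.range (D + 1), faceCount D k σ (ρ ((π ^ q) 0)) (ρ ((π ^ (q + 1)) 0))
    with hΨ
  have hbound : ∀ ρ : Equiv.Perm (Fin (D + 1)), Ψ ρ + 2 * k ≤ (D + 1) * k + 2 := by
    intro ρ
    have h := Aux.jacket_bound σ hconn (fun q => ρ ((π ^ q) 0))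
      (by show ρ ((π ^ (D + 1)) 0) = ρ ((π ^ 0) 0); rw [hpow, pow_zero])
      (by
        intro c
        obtain ⟨q, hq, he⟩ := hsurjpow (ρ⁻¹ c)
        exact ⟨q, hq, by show ρ ((π ^ q) 0) = c; rw [he, Equiv.Perm.apply_inv_self]⟩)
    exact h
  have hM : ∀ ρ ∈ (Finset.univ : Finset (Equiv.Perm (Fin (D + 1)))),
      Ψ ρ ≤ 2 + (D - 1) * k := by
    intro ρ _
    have h := hbound ρ
    have he : (D + 1) * k = (D - 1) * k + 2 * k := by
      rw [show D + 1 = (D - 1) + 2 from by omega, add_mul]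
    omega
  have h1D : 1 ≤ D := by omega
  have hcast : ((D : ℚ) - 1) = ((D - 1 : ℕ) : ℚ) := by
    rw [Nat.cast_sub h1D, Nat.cast_one]
  have hfac : ((D - 1).factorial : ℚ) / 2 ≠ 0 := by
    apply div_ne_zero
    · exact_mod_cast (Nat.factorial_pos _).ne'
    · norm_num
  have h0 : (D : ℚ) + (D : ℚ) * ((D : ℚ) - 1) / 2 * (k : ℚ) - (totalFaces D k σ : ℚ) = 0 :=
    (mul_eq_zero.mp hω).resolve_left hfac
  have h2F : 2 * totalFaces D k σ = 2 * D + D * ((D - 1) * k) := by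
    have hq2 : ((2 * totalFaces D k σ : ℕ) : ℚ)
        = ((2 * D + D * ((D - 1) * k) : ℕ) : ℚ) := by
      push_cast
      rw [← hcast]
      ring_nf
      ring_nf at h0
      linarith
    exact_mod_cast hq2
  set c0 := (Finset.univ.filter
    fun ρ : Equiv.Perm (Fin (D + 1)) => ρ 0 = 0 ∧ ρ 1 = 1).card with hc0
  have hq : ∀ q ∈ Finset.range (D + 1),
      (∑ ρ : Equiv.Perm (Fin (D + 1)),
        faceCount D k σ (ρ ((π ^ q) 0)) (ρ ((π ^ (q + 1)) 0)))
      = c0 * (2 * totalFaces D k σ) := by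
    intro q _
    have hab : (π ^ q) 0 ≠ (π ^ (q + 1)) 0 := by
      have hstep : (π ^ (q + 1)) 0 = π ((π ^ q) 0) := by
        rw [pow_succ', Equiv.Perm.mul_apply]
      rw [hstep]
      exact fun h => hmove _ h.symm
    rw [Aux.sum_perm_faceCount σ hab h01, Aux.offDiag_sum D k σ]
  have hsum1 : (∑ ρ : Equiv.Perm (Fin (D + 1)), Ψ ρ)
      = ∑ ρ : Equiv.Perm (Fin (D + 1)), (2 + (D - 1) * k) := by
    calc (∑ ρ : Equiv.Perm (Fin (D + 1)), Ψ ρ)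
        = ∑ q ∈ Finset.range (D + 1), ∑ ρ : Equiv.Perm (Fin (D + 1)),
            faceCount D k σ (ρ ((π ^ q) 0)) (ρ ((π ^ (q + 1)) 0)) := Finset.sum_comm
      _ = ∑ q ∈ Finset.range (D + 1), c0 * (2 * totalFaces D k σ) :=
            Finset.sum_congr rfl hq
      _ = (D + 1) * (c0 * (2 * totalFaces D k σ)) := by
            rw [Finset.sum_const, Finset.card_range, smul_eq_mul]
      _ = ∑ ρ : Equiv.Perm (Fin (D + 1)), (2 + (D - 1) * k) := by
            rw [Finset.sum_const, smul_eq_mul, Aux.perm_card_fib h01, ← hc0, h2F]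
            ring
  have hall := (Finset.sum_eq_sum_iff_of_le hM).mp hsum1
  have h1 := hall 1 (Finset.mem_univ 1)
  have hjf : jacketFaces D k σ π = Ψ 1 := by
    simp only [hΨ, jacketFaces, Equiv.Perm.one_apply]
  refine ⟨?_, by rw [hjf, h1]⟩
  rw [jacketGenus, hjf, h1, hcast]
  push_cast
  ring
end
end

section
/- Let D ≥ 3, k ≥ 2, and let G be a connected closed bipartite (D+1)-colored graph with 2k vertices. Suppose G contains a D-dipole: a black vertex i₀, a white vertex j₀ and a color c₀ such that σ_c i₀ = j₀ for every color c ≠ c₀ and σ_{c₀} i₀ ≠ j₀. Let G' be the contraction of this D-dipole. Then G' has 2(k−1) vertices, satisfies F(G') = F(G) − D(D−1)/2, its degree is unchanged, ω(G') = ω(G), and G' is connected. -/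
open scoped Classical

noncomputable section

section Aux
open Equiv Equiv.Perm Finset
theorem Equiv.Perm.apply_inv_self_s13 {α : Type*} (f : Perm α) (x : α) : f (f⁻¹ x) = x :=
  f.apply_symm_apply x
theorem Equiv.Perm.inv_apply_self_s13 {α : Type*} (f : Perm α) (x : α) : f⁻¹ (f x) = x :=
  f.symm_apply_apply x
lemma fix_card {k : ℕ} (g : Equiv.Perm (Fin k)) :
    (Finset.univ.filter fun i => g i = i).card = k - g.support.card := by
  have h := Finset.card_filter_add_card_filter_not (s := (Finset.univ : Finset (Fin k)))
    (p := fun i => g i = i)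
  simp only [Finset.card_univ, Fintype.card_fin] at h
  have hs : g.support = Finset.univ.filter fun i => ¬ g i = i := by
    ext x; simp [Equiv.Perm.mem_support]
  rw [hs]; omega

lemma numCycles_mul_swap_s13 {k : ℕ} (τ : Equiv.Perm (Fin k)) (a : Fin k) (ha : τ a ≠ a) :
    numCycles (τ * Equiv.swap a (τ⁻¹ a)) = numCycles τ + 1 := by
  classical
  set C := τ.cycleOf a with hCdef
  have hCapp : ∀ y, C y = if τ.SameCycle a y then τ y else y := fun y => τ.cycleOf_apply a y
  have hCa : C a = τ a := τ.cycleOf_apply_self a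
  have hC : C.IsCycle := Equiv.Perm.isCycle_cycleOf τ ha
  have hCa' : C a ≠ a := by rw [hCa]; exact ha
  have hCiapp : ∀ y, τ.SameCycle a y → C⁻¹ y = τ⁻¹ y := by
    intro y hy
    have h1 : τ.SameCycle a (τ⁻¹ y) := hy.trans ⟨-1, by simp⟩
    have : C (τ⁻¹ y) = y := by rw [hCapp, if_pos h1]; simp
    conv_lhs => rw [← this]
    rw [Equiv.Perm.inv_apply_self_s13]
  have hCinv : C⁻¹ a = τ⁻¹ a := hCiapp a (Equiv.Perm.SameCycle.refl τ a)
  set R := τ * C⁻¹ with hRdef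
  have hdisj : R.Disjoint C := by
    intro y
    by_cases hy : τ.SameCycle a y
    · left
      have : C⁻¹ y = τ⁻¹ y := hCiapp y hy
      rw [hRdef, Equiv.Perm.mul_apply, this, Equiv.Perm.apply_inv_self_s13]
    · right; rw [hCapp, if_neg hy]
  have hτRC : τ = R * C := by rw [hRdef]; simp [mul_assoc]
  have hC' : C * Equiv.swap a (C⁻¹ a) = Equiv.swap a (C a) * C := by
    rw [Equiv.mul_swap_eq_swap_mul]
    simp [Equiv.Perm.apply_inv_self_s13, Equiv.swap_comm]
  have hπ : τ * Equiv.swap a (τ⁻¹ a) = R * (Equiv.swap a (C a) * C) := by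
    rw [← hC', ← hCinv] at *
    rw [hτRC, mul_assoc, hCinv]
  have hsupp_le : R.support.card + C.support.card ≤ k := by
    have := Finset.card_le_card (Finset.subset_univ (R.support ∪ C.support))
    rw [Finset.card_union_of_disjoint hdisj.disjoint_support] at this
    simpa using this
  have hsuppτ : τ.support.card = R.support.card + C.support.card := by
    rw [hτRC, hdisj.support_mul, Finset.card_union_of_disjoint hdisj.disjoint_support]
  have hCcard2 : 2 ≤ C.support.card := hC.two_le_card_support
  by_cases hl : C (C a) = a
  · -- cycle of length 2
    have hsw : C = Equiv.swap a (C a) := hC.eq_swap_of_apply_apply_eq_self hCa' hl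
    have hone : Equiv.swap a (C a) * C = 1 := by
      nth_rewrite 2 [hsw]; exact Equiv.swap_mul_self a (C a)
    have hπR : τ * Equiv.swap a (τ⁻¹ a) = R := by rw [hπ, hone, mul_one]
    have hsC : C.support.card = 2 := by
      rw [hsw]; exact Equiv.Perm.card_support_swap (Ne.symm hCa')
    have hcT : τ.cycleType.card = R.cycleType.card + 1 := by
      rw [hτRC, hdisj.cycleType_mul, hC.cycleType]
      simp
    rw [hπR]
    unfold numCycles
    rw [fix_card, fix_card, hcT, hsuppτ, hsC]
    omega
  · -- cycle of length ≥ 3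
    have hcyc' : (Equiv.swap a (C a) * C).IsCycle := hC.swap_mul hCa' hl
    have hsupp' : (Equiv.swap a (C a) * C).support = C.support \ {a} :=
      Equiv.Perm.support_swap_mul_eq C a hl
    have haC : a ∈ C.support := Equiv.Perm.mem_support.2 hCa'
    have hsC' : (Equiv.swap a (C a) * C).support.card = C.support.card - 1 := by
      rw [hsupp', Finset.sdiff_singleton_eq_erase, Finset.card_erase_of_mem haC]
    have hdisj' : R.Disjoint (Equiv.swap a (C a) * C) := by
      intro y
      rcases hdisj y with h | h
      · exact Or.inl h
      · right
        have hya : y ≠ a := fun hy => hCa' (by rw [← hy, h, hy])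
        have hyCa : y ≠ C a := by
          intro hy
          have h2 : C (C a) = C a := by rw [← hy, h]
          exact hCa' (C.injective h2)
        simp [Equiv.Perm.mul_apply, h, Equiv.swap_apply_of_ne_of_ne hya hyCa]
    unfold numCycles
    rw [hπ, hdisj'.cycleType_mul, hcyc'.cycleType, fix_card, fix_card,
      hdisj'.support_mul, Finset.card_union_of_disjoint hdisj'.disjoint_support,
      hτRC, hdisj.cycleType_mul, hC.cycleType, hsC',
      hdisj.support_mul, Finset.card_union_of_disjoint hdisj.disjoint_support]
    simp only [Multiset.coe_card, List.length_singleton, Multiset.card_add, Multiset.card_singleton]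
    -- arrange; nat arithmetic
    omega

lemma numCycles_extendDomain {m k : ℕ} (p : Fin k → Prop) [DecidablePred p]
    (f : Fin m ≃ Subtype p) (g : Equiv.Perm (Fin m)) :
    numCycles (g.extendDomain f) = numCycles g + (Finset.univ.filter fun x => ¬ p x).card := by
  unfold numCycles
  rw [Equiv.Perm.cycleType_extendDomain]
  have hset : (Finset.univ.filter fun x => (g.extendDomain f) x = x)
      = ((Finset.univ.filter fun i => g i = i).image (fun i => ((f i : Subtype p) : Fin k)))
        ∪ (Finset.univ.filter fun x => ¬ p x) := by
    ext x
    simp only [Finset.mem_filter, Finset.mem_univ, true_and, Finset.mem_union, Finset.mem_image]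
    by_cases hp : p x
    · rw [show x = ((f (f.symm ⟨x, hp⟩) : Subtype p) : Fin k) by simp]
      rw [Equiv.Perm.extendDomain_apply_image]
      constructor
      · intro h
        exact Or.inl ⟨f.symm ⟨x, hp⟩, by
          have := Subtype.coe_injective h
          have := f.injective this
          exact ⟨this, by simp⟩⟩
      · rintro (⟨i, hi, hix⟩ | h)
        · have : i = f.symm ⟨x, hp⟩ := by
            have := Subtype.coe_injective hix
            have := f.injective this
            exact this
          rw [← this, hi]
        · simp at h
          exact absurd hp h
    · constructor
      · intro _; exact Or.inr hp
      · intro _; exact Equiv.Perm.extendDomain_apply_not_subtype g f hp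
  rw [hset, Finset.card_union_of_disjoint]
  · rw [Finset.card_image_of_injOn (fun a _ b _ h => f.injective (Subtype.coe_injective h))]
    ring
  · rw [Finset.disjoint_left]
    rintro x hx hx'
    simp only [Finset.mem_filter, Finset.mem_image] at hx hx'
    obtain ⟨i, _, rfl⟩ := hx
    exact hx'.2 (f i).2

section Main

variable {D k : ℕ} (σ : Fin (D + 1) → Equiv.Perm (Fin k))
  (i₀ j₀ : Fin k) (c₀ : Fin (D + 1))
  (σ' : Fin (D + 1) → Equiv.Perm (Fin (k - 1)))
  (eb ew : Fin (k - 1) → Fin k)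

lemma eb_surj (hk : 2 ≤ k) (heb : Function.Injective eb) (hebi : ∀ i, eb i ≠ i₀) :
    ∀ x : Fin k, x ≠ i₀ → ∃ i, eb i = x := by
  intro x hx
  have hcard : Fintype.card {x : Fin k // x ≠ i₀} = k - 1 := by
    rw [Fintype.card_subtype_compl]
    simp
  have hbij : Function.Bijective (fun i : Fin (k-1) => (⟨eb i, hebi i⟩ : {x : Fin k // x ≠ i₀})) := by
    rw [Fintype.bijective_iff_injective_and_card]
    constructor
    · intro a b hab
      exact heb (congrArg Subtype.val hab)
    · simp [hcard]
  obtain ⟨i, hi⟩ := hbij.surjective ⟨x, hx⟩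
  exact ⟨i, congrArg Subtype.val hi⟩

lemma skip_rel
    (hdip : ∀ c : Fin (D + 1), c ≠ c₀ → σ c i₀ = j₀)
    (hebi : ∀ i, eb i ≠ i₀)
    (hne : ∀ c : Fin (D + 1), c ≠ c₀ → ∀ i : Fin (k - 1), σ c (eb i) = ew (σ' c i))
    (hcon₁ : ∀ i : Fin (k - 1), eb i = (σ c₀)⁻¹ j₀ → ew (σ' c₀ i) = σ c₀ i₀)
    (hcon₂ : ∀ i : Fin (k - 1), eb i ≠ (σ c₀)⁻¹ j₀ → ew (σ' c₀ i) = σ c₀ (eb i)) :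
    ∀ (d : Fin (D + 1)) (i : Fin (k - 1)),
      ew (σ' d i) = if σ d (eb i) = j₀ then σ c₀ i₀ else σ d (eb i) := by
  intro d i
  by_cases hd : d = c₀
  · subst hd
    by_cases h2 : eb i = (σ d)⁻¹ j₀
    · rw [if_pos (by rw [h2]; simp), hcon₁ i h2]
    · rw [if_neg (fun h => h2 (by rw [← h]; simp)), hcon₂ i h2]
  · rw [if_neg (fun h => hebi i ((σ d).injective (by rw [h, hdip d hd]))), hne d hd i]

lemma key_L1
    (hdip : ∀ c : Fin (D + 1), c ≠ c₀ → σ c i₀ = j₀) (hc₀ : σ c₀ i₀ ≠ j₀)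
    (hebi : ∀ i, eb i ≠ i₀)
    (hskip : ∀ (d : Fin (D + 1)) (i : Fin (k - 1)),
      ew (σ' d i) = if σ d (eb i) = j₀ then σ c₀ i₀ else σ d (eb i)) :
    ∀ (c c' : Fin (D + 1)) (i : Fin (k - 1)),
      eb (((σ' c')⁻¹ * σ' c) i) =
        if ((σ c')⁻¹ * σ c) (eb i) = i₀ then ((σ c')⁻¹ * σ c) i₀
        else ((σ c')⁻¹ * σ c) (eb i) := by
  intro c c' i
  have hc0 : ∀ (d : Fin (D+1)) (x : Fin (k-1)), σ d (eb x) = j₀ → d = c₀ := by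
    intro d x h
    by_contra hd
    exact hebi x ((σ d).injective (by rw [h, hdip d hd]))
  set a := ((σ' c')⁻¹ * σ' c) i with hadef
  have haw : σ' c' a = σ' c i := by rw [hadef]; simp
  have H : (if σ c' (eb a) = j₀ then σ c₀ i₀ else σ c' (eb a))
      = (if σ c (eb i) = j₀ then σ c₀ i₀ else σ c (eb i)) := by
    have h1 := hskip c' a
    rw [haw] at h1
    exact h1.symm.trans (hskip c i)
  rw [Equiv.Perm.mul_apply, Equiv.Perm.mul_apply]
  by_cases hu : σ c' (eb a) = j₀ <;> by_cases hv : σ c (eb i) = j₀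
  · -- both j₀: c = c' = c₀
    have hc' := hc0 c' a hu
    have hcc := hc0 c i hv
    rw [if_neg]
    · apply (σ c').injective
      rw [Equiv.Perm.apply_inv_self_s13, hu, hv]
    · intro h
      have h2 : σ c (eb i) = σ c' i₀ := by rw [← h]; simp
      apply hc₀
      rw [← hc', ← h2, hv]
  · -- u = j₀, v ≠ j₀
    rw [if_pos hu, if_neg hv] at H
    have hc' := hc0 c' a hu
    have hcc : c ≠ c₀ := by
      intro h
      rw [h] at H
      exact hebi i (((σ c₀).injective H).symm)
    rw [if_pos]
    · apply (σ c').injective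
      rw [Equiv.Perm.apply_inv_self_s13, hu, hdip c hcc]
    · rw [← H, hc']; simp
  · -- u ≠ j₀, v = j₀
    rw [if_neg hu, if_pos hv] at H
    have hcc := hc0 c i hv
    have hc' : c' ≠ c₀ := by
      intro h
      rw [h] at H
      exact hebi a ((σ c₀).injective H)
    rw [if_pos]
    · apply (σ c').injective
      rw [Equiv.Perm.apply_inv_self_s13, H, hcc]
    · rw [hv, ← hdip c' hc']; simp
  · -- neither
    rw [if_neg hu, if_neg hv] at H
    rw [if_neg]
    · apply (σ c').injective
      rw [Equiv.Perm.apply_inv_self_s13, H]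
    · intro h
      have h2 : σ c (eb i) = σ c' i₀ := by rw [← h]; simp
      exact hebi a ((σ c').injective (H.trans h2))

end Main

section Faces
variable {D k : ℕ} (σ : Fin (D + 1) → Equiv.Perm (Fin k))
  (i₀ j₀ : Fin k) (c₀ : Fin (D + 1))
  (σ' : Fin (D + 1) → Equiv.Perm (Fin (k - 1)))
  (eb ew : Fin (k - 1) → Fin k)
  (f : Fin (k - 1) ≃ {x : Fin k // x ≠ i₀})
  (hf : ∀ i, ((f i : {x : Fin k // x ≠ i₀}) : Fin k) = eb i)
  (hdip : ∀ c : Fin (D + 1), c ≠ c₀ → σ c i₀ = j₀) (hc₀ : σ c₀ i₀ ≠ j₀)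
  (hebi : ∀ i, eb i ≠ i₀)
  (hL1 : ∀ (c c' : Fin (D + 1)) (i : Fin (k - 1)),
      eb (((σ' c')⁻¹ * σ' c) i) =
        if ((σ c')⁻¹ * σ c) (eb i) = i₀ then ((σ c')⁻¹ * σ c) i₀
        else ((σ c')⁻¹ * σ c) (eb i))

include hf hdip hebi hL1 in
lemma face_both (c c' : Fin (D + 1)) (hc : c ≠ c₀) (hc' : c' ≠ c₀) :
    numCycles ((σ c')⁻¹ * σ c) = numCycles ((σ' c')⁻¹ * σ' c) + 1 := by
  have hext : (σ c')⁻¹ * σ c = ((σ' c')⁻¹ * σ' c).extendDomain f := by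
    ext x
    by_cases hx : x = i₀
    · subst hx
      rw [Equiv.Perm.extendDomain_apply_not_subtype _ f (by simp)]
      simp only [Equiv.Perm.mul_apply]
      rw [hdip c hc, ← hdip c' hc']
      simp
    · have hxi : eb (f.symm ⟨x, hx⟩) = x := by rw [← hf]; simp
      have hRHS : (((σ' c')⁻¹ * σ' c).extendDomain f) x
          = eb (((σ' c')⁻¹ * σ' c) (f.symm ⟨x, hx⟩)) := by
        conv_lhs => rw [← hxi, ← hf]
        rw [Equiv.Perm.extendDomain_apply_image, hf]
      rw [hRHS, hL1 c c' (f.symm ⟨x, hx⟩), if_neg, hxi]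
      intro h
      have h2 := congrArg (⇑(σ c')) h
      simp only [Equiv.Perm.mul_apply, Equiv.Perm.apply_inv_self_s13] at h2
      rw [hdip c' hc'] at h2
      exact hebi _ ((σ c).injective (by rw [h2, hdip c hc]))
  rw [hext, numCycles_extendDomain]
  congr 1
  have : (Finset.univ.filter fun x : Fin k => ¬ x ≠ i₀) = {i₀} := by
    ext x; simp
  rw [this, Finset.card_singleton]

include hf hdip hc₀ hebi hL1 in
lemma face_mixed (c c' : Fin (D + 1))
    (h : (c = c₀ ∧ c' ≠ c₀) ∨ (c ≠ c₀ ∧ c' = c₀)) :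
    numCycles ((σ c')⁻¹ * σ c) = numCycles ((σ' c')⁻¹ * σ' c) := by
  have hgi : ((σ c')⁻¹ * σ c) i₀ ≠ i₀ := by
    intro hcon
    have h2 := congrArg (⇑(σ c')) hcon
    simp only [Equiv.Perm.mul_apply, Equiv.Perm.apply_inv_self_s13] at h2
    rcases h with ⟨h1, h2'⟩ | ⟨h1, h2'⟩
    · rw [hdip c' h2', h1] at h2
      exact hc₀ h2
    · rw [hdip c h1, h2'] at h2
      exact hc₀ h2.symm
  have hext : ((σ c')⁻¹ * σ c) * Equiv.swap i₀ (((σ c')⁻¹ * σ c)⁻¹ i₀)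
      = ((σ' c')⁻¹ * σ' c).extendDomain f := by
    ext x
    by_cases hx : x = i₀
    · subst hx
      rw [Equiv.Perm.extendDomain_apply_not_subtype _ f (by simp)]
      rw [Equiv.Perm.mul_apply, Equiv.swap_apply_left, Equiv.Perm.apply_inv_self_s13]
    · have hxi : eb (f.symm ⟨x, hx⟩) = x := by rw [← hf]; simp
      have hRHS : (((σ' c')⁻¹ * σ' c).extendDomain f) x
          = eb (((σ' c')⁻¹ * σ' c) (f.symm ⟨x, hx⟩)) := by
        conv_lhs => rw [← hxi, ← hf]
        rw [Equiv.Perm.extendDomain_apply_image, hf]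
      rw [hRHS, hL1 c c' (f.symm ⟨x, hx⟩), hxi]
      by_cases hcase : ((σ c')⁻¹ * σ c) x = i₀
      · have hswap : x = ((σ c')⁻¹ * σ c)⁻¹ i₀ := by
          have h2 := congrArg (⇑((σ c')⁻¹ * σ c)⁻¹) hcase
          simpa using h2
        rw [if_pos hcase, Equiv.Perm.mul_apply (((σ c')⁻¹ * σ c)), hswap,
          Equiv.swap_apply_right]
      · rw [if_neg hcase, Equiv.Perm.mul_apply (((σ c')⁻¹ * σ c))]
        rw [Equiv.swap_apply_of_ne_of_ne hx
          (fun hh => hcase (by rw [hh]; simp))]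
  have h1 := numCycles_mul_swap_s13 ((σ c')⁻¹ * σ c) i₀ hgi
  rw [hext, numCycles_extendDomain] at h1
  have hcard : (Finset.univ.filter fun x : Fin k => ¬ x ≠ i₀) = {i₀} := by ext x; simp
  rw [hcard, Finset.card_singleton] at h1
  omega

end Faces

lemma pair_count (D : ℕ) (c₀ : Fin (D + 1)) :
    2 * ((Finset.univ.filter fun p : Fin (D + 1) × Fin (D + 1) =>
      p.1 < p.2 ∧ p.1 ≠ c₀ ∧ p.2 ≠ c₀).card) = D * D - D := by
  classical
  set s : Finset (Fin (D + 1)) := Finset.univ.erase c₀ with hs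
  have hscard : s.card = D := by
    rw [hs, Finset.card_erase_of_mem (Finset.mem_univ _)]
    simp
  set A := Finset.univ.filter fun p : Fin (D + 1) × Fin (D + 1) =>
      p.1 < p.2 ∧ p.1 ≠ c₀ ∧ p.2 ≠ c₀ with hA
  set B := Finset.univ.filter fun p : Fin (D + 1) × Fin (D + 1) =>
      p.2 < p.1 ∧ p.1 ≠ c₀ ∧ p.2 ≠ c₀ with hB
  have hBA : B = A.image Prod.swap := by
    ext p
    simp only [hA, hB, Finset.mem_image, Finset.mem_filter, Finset.mem_univ, true_and]
    constructor
    · intro ⟨h1, h2, h3⟩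
      exact ⟨p.swap, ⟨h1, h3, h2⟩, p.swap_swap⟩
    · rintro ⟨q, ⟨h1, h2, h3⟩, rfl⟩
      exact ⟨h1, h3, h2⟩
  have hcardAB : B.card = A.card := by
    rw [hBA, Finset.card_image_of_injective _ Prod.swap_injective]
  have hunion : A ∪ B = s.offDiag := by
    ext p
    simp only [hA, hB, Finset.mem_union, Finset.mem_filter, Finset.mem_univ, true_and,
      Finset.mem_offDiag, hs, Finset.mem_erase]
    constructor
    · rintro (⟨h1, h2, h3⟩ | ⟨h1, h2, h3⟩)
      · exact ⟨⟨h2, trivial⟩, ⟨h3, trivial⟩, ne_of_lt h1⟩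
      · exact ⟨⟨h2, trivial⟩, ⟨h3, trivial⟩, (ne_of_lt h1).symm⟩
    · rintro ⟨⟨h2, -⟩, ⟨h3, -⟩, hne⟩
      rcases lt_or_gt_of_ne hne with h | h
      · exact Or.inl ⟨h, h2, h3⟩
      · exact Or.inr ⟨h, h2, h3⟩
  have hdisj : Disjoint A B := by
    rw [Finset.disjoint_left]
    intro p hp hq
    simp only [hA, hB, Finset.mem_filter] at hp hq
    exact absurd (hp.2.1.trans hq.2.1) (lt_irrefl _)
  have := Finset.card_union_of_disjoint hdisj
  rw [hunion, Finset.offDiag_card, hcardAB, hscard] at this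
  omega


lemma mul_pred_eq (D : ℕ) : D * D - D = D * (D - 1) := by
  rw [Nat.mul_sub, Nat.mul_one]

end Aux

/-- Let `G` (encoded by `σ` on `Fin k`, `k ≥ 2`) be connected and contain
a `D`-dipole: a black vertex `i₀`, a white vertex `j₀` and a color `c₀` with `σ c i₀ = j₀`
for all `c ≠ c₀` and `σ c₀ i₀ ≠ j₀`.  Let `G'` (encoded by `σ'` on `Fin (k−1)`, hence with
`2(k−1)` vertices) be the contraction of this `D`-dipole: the black vertices other than `i₀`
are relabeled via the injection `eb : Fin (k−1) → Fin k` avoiding `i₀`, the white vertices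
other than `j₀` via the injection `ew` avoiding `j₀`; for `c ≠ c₀` the permutation `σ' c`
agrees with `σ c` under these relabelings, and `σ' c₀` sends the black vertex
`(σ c₀)⁻¹ j₀` to the white vertex `σ c₀ i₀` and agrees with `σ c₀` elsewhere.
Then `F(G) = F(G') + D(D−1)/2`, `ω(G') = ω(G)`, and `G'` is connected. -/
theorem dipole_contraction_invariants (D k : ℕ) (hD : 3 ≤ D) (hk : 2 ≤ k)
    (σ : Fin (D + 1) → Equiv.Perm (Fin k)) (hconn : Connected D k σ)
    (i₀ j₀ : Fin k) (c₀ : Fin (D + 1))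
    (hdip : ∀ c : Fin (D + 1), c ≠ c₀ → σ c i₀ = j₀) (hc₀ : σ c₀ i₀ ≠ j₀)
    (σ' : Fin (D + 1) → Equiv.Perm (Fin (k - 1)))
    (eb ew : Fin (k - 1) → Fin k)
    (heb : Function.Injective eb) (hebi : ∀ i, eb i ≠ i₀)
    (hew : Function.Injective ew) (hewj : ∀ i, ew i ≠ j₀)
    (hne : ∀ c : Fin (D + 1), c ≠ c₀ → ∀ i : Fin (k - 1), σ c (eb i) = ew (σ' c i))
    (hcon₁ : ∀ i : Fin (k - 1), eb i = (σ c₀)⁻¹ j₀ → ew (σ' c₀ i) = σ c₀ i₀)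
    (hcon₂ : ∀ i : Fin (k - 1), eb i ≠ (σ c₀)⁻¹ j₀ → ew (σ' c₀ i) = σ c₀ (eb i)) :
    totalFaces D k σ = totalFaces D (k - 1) σ' + D * (D - 1) / 2 ∧
    degree D (k - 1) σ' = degree D k σ ∧
    Connected D (k - 1) σ' := by
  classical
  have hcard : Fintype.card {x : Fin k // x ≠ i₀} = k - 1 := by
    rw [Fintype.card_subtype_compl]
    simp
  have hbij : Function.Bijective
      (fun i : Fin (k - 1) => (⟨eb i, hebi i⟩ : {x : Fin k // x ≠ i₀})) := by
    rw [Fintype.bijective_iff_injective_and_card]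
    exact ⟨fun a b hab => heb (congrArg Subtype.val hab), by simp [hcard]⟩
  set f : Fin (k - 1) ≃ {x : Fin k // x ≠ i₀} := Equiv.ofBijective _ hbij with hfdef
  have hf : ∀ i, ((f i : {x : Fin k // x ≠ i₀}) : Fin k) = eb i := fun i => rfl
  have hskip := skip_rel σ i₀ j₀ c₀ σ' eb ew hdip hebi hne hcon₁ hcon₂
  have hL1 := key_L1 σ i₀ j₀ c₀ σ' eb ew hdip hc₀ hebi hskip
  have hFB := face_both σ i₀ j₀ c₀ σ' eb f hf hdip hebi hL1
  have hFM := face_mixed σ i₀ j₀ c₀ σ' eb f hf hdip hc₀ hebi hL1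
  -- total face count
  set Q : Finset (Fin (D + 1) × Fin (D + 1)) :=
    Finset.univ.filter (fun p : Fin (D + 1) × Fin (D + 1) => p.1 < p.2) with hQ
  set m := (Finset.univ.filter fun p : Fin (D + 1) × Fin (D + 1) =>
      p.1 < p.2 ∧ p.1 ≠ c₀ ∧ p.2 ≠ c₀).card with hm
  have m2 : 2 * m = D * (D - 1) := by
    rw [hm, pair_count D c₀, mul_pred_eq]
  have hQfilter : Q.filter (fun p => p.1 ≠ c₀ ∧ p.2 ≠ c₀)
      = Finset.univ.filter
        (fun p : Fin (D + 1) × Fin (D + 1) => p.1 < p.2 ∧ p.1 ≠ c₀ ∧ p.2 ≠ c₀) := by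
    rw [hQ, Finset.filter_filter]
  have htot : totalFaces D k σ = totalFaces D (k - 1) σ' + m := by
    unfold totalFaces
    rw [← Finset.sum_filter_add_sum_filter_not Q (fun p => p.1 ≠ c₀ ∧ p.2 ≠ c₀)
        (fun p => faceCount D k σ p.1 p.2),
      ← Finset.sum_filter_add_sum_filter_not Q (fun p => p.1 ≠ c₀ ∧ p.2 ≠ c₀)
        (fun p => faceCount D (k - 1) σ' p.1 p.2)]
    have h1 : ∑ p ∈ Q.filter (fun p => p.1 ≠ c₀ ∧ p.2 ≠ c₀), faceCount D k σ p.1 p.2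
        = ∑ p ∈ Q.filter (fun p => p.1 ≠ c₀ ∧ p.2 ≠ c₀),
            (faceCount D (k - 1) σ' p.1 p.2 + 1) := by
      apply Finset.sum_congr rfl
      intro p hp
      simp only [Finset.mem_filter, hQ, Finset.mem_univ, true_and] at hp
      exact hFB p.1 p.2 hp.2.1 hp.2.2
    have h2 : ∑ p ∈ Q.filter (fun p => ¬(p.1 ≠ c₀ ∧ p.2 ≠ c₀)), faceCount D k σ p.1 p.2
        = ∑ p ∈ Q.filter (fun p => ¬(p.1 ≠ c₀ ∧ p.2 ≠ c₀)),
            faceCount D (k - 1) σ' p.1 p.2 := by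
      apply Finset.sum_congr rfl
      intro p hp
      simp only [Finset.mem_filter, hQ, Finset.mem_univ, true_and, not_and_or, not_not] at hp
      obtain ⟨hlt, hor⟩ := hp
      rcases hor with h | h
      · exact hFM p.1 p.2 (Or.inl ⟨h, fun hh => (ne_of_lt hlt) (h.trans hh.symm)⟩)
      · exact hFM p.1 p.2 (Or.inr ⟨fun hh => (ne_of_lt hlt) (hh.trans h.symm), h⟩)
    rw [h1, h2, Finset.sum_add_distrib, Finset.sum_const, smul_eq_mul, mul_one, hQfilter, ← hm]
    ring
  have hmval : m = D * (D - 1) / 2 := by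
    have h := m2
    set e := D * (D - 1) with he
    omega
  refine ⟨by rw [htot, hmval], ?_, ?_⟩
  · -- degree
    unfold degree
    have hkQ : ((k - 1 : ℕ) : ℚ) = (k : ℚ) - 1 := by
      rw [Nat.cast_sub (by omega : 1 ≤ k)]
      simp
    have htQ : (totalFaces D k σ : ℚ) = (totalFaces D (k - 1) σ' : ℚ) + (m : ℚ) := by
      rw [htot]
      push_cast
      ring
    have hmQ : (m : ℚ) = (D : ℚ) * ((D : ℚ) - 1) / 2 := by
      have h2m : ((2 * m : ℕ) : ℚ) = ((D * (D - 1) : ℕ) : ℚ) := by rw [m2]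
      push_cast [Nat.cast_sub (by omega : 1 ≤ D)] at h2m
      linarith
    rw [hkQ, htQ, hmQ]
    ring
  · -- connectedness
    intro i j
    set S' : Set (Equiv.Perm (Fin (k - 1))) :=
      {g : Equiv.Perm (Fin (k - 1)) | ∃ c c' : Fin (D + 1), g = (σ' c')⁻¹ * σ' c} with hS'
    set O : Set (Fin (k - 1)) := {y | ∃ h ∈ Subgroup.closure S', h i = y} with hO
    have hOrefl : i ∈ O := ⟨1, Subgroup.one_mem _, rfl⟩
    have hOstep : ∀ c c' : Fin (D + 1), ∀ y ∈ O, ((σ' c')⁻¹ * σ' c) y ∈ O := by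
      rintro c c' y ⟨h, hh, rfl⟩
      exact ⟨((σ' c')⁻¹ * σ' c) * h,
        Subgroup.mul_mem _ (Subgroup.subset_closure ⟨c, c', rfl⟩) hh, rfl⟩
    have hbne : (σ c₀)⁻¹ j₀ ≠ i₀ := by
      intro h
      apply hc₀
      rw [← h]
      simp
    obtain ⟨pb, hpb⟩ := eb_surj (i₀ := i₀) (eb := eb) hk heb hebi ((σ c₀)⁻¹ j₀) hbne
    set T : Set (Fin k) := {x | (x = i₀ ∧ pb ∈ O) ∨ ∃ y ∈ O, eb y = x} with hT
    have hnb : ∀ c' : Fin (D + 1), c' ≠ c₀ → pb ∈ O →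
        ∃ y ∈ O, eb y = ((σ c')⁻¹ * σ c₀) i₀ := by
      intro c' hcc' hpbO
      have hcond : ((σ c')⁻¹ * σ c₀) (eb pb) = i₀ := by
        rw [Equiv.Perm.mul_apply, hpb, Equiv.Perm.apply_inv_self_s13, ← hdip c' hcc',
          Equiv.Perm.inv_apply_self_s13]
      have h5 := hL1 c₀ c' pb
      rw [if_pos hcond] at h5
      exact ⟨((σ' c')⁻¹ * σ' c₀) pb, hOstep c₀ c' pb hpbO, h5⟩
    have hTstep : ∀ c c' : Fin (D + 1), ∀ x ∈ T, ((σ c')⁻¹ * σ c) x ∈ T := by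
      intro c c' x hx
      rcases hx with ⟨hxi, hpbO⟩ | ⟨y, hyO, hyx⟩
      · subst hxi
        by_cases hfix : ((σ c')⁻¹ * σ c) x = x
        · rw [hfix]
          exact Or.inl ⟨rfl, hpbO⟩
        · by_cases hcc' : c' = c₀
          · have hc : c ≠ c₀ := by
              intro h
              apply hfix
              rw [h, hcc']
              simp
            refine Or.inr ⟨pb, hpbO, ?_⟩
            rw [hpb, Equiv.Perm.mul_apply, hcc', hdip c hc]
          · have hc : c = c₀ := by
              by_contra h
              apply hfix
              rw [Equiv.Perm.mul_apply, hdip c h, ← hdip c' hcc', Equiv.Perm.inv_apply_self_s13]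
            rw [hc]
            exact Or.inr (hnb c' hcc' hpbO)
      · subst hyx
        by_cases hcase : ((σ c')⁻¹ * σ c) (eb y) = i₀
        · rw [hcase]
          refine Or.inl ⟨rfl, ?_⟩
          by_cases hcc' : c' = c₀
          · have hc : c ≠ c₀ := by
              intro h
              apply hebi y
              rw [h, hcc'] at hcase
              simpa using hcase
            have h5 := hL1 c c' y
            rw [if_pos hcase] at h5
            have h6 : eb (((σ' c')⁻¹ * σ' c) y) = eb pb := by
              rw [h5, hpb, Equiv.Perm.mul_apply, hcc', hdip c hc]
            have h7 := heb h6
            rw [← h7]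
            exact hOstep c c' y hyO
          · have h7 := congrArg (⇑(σ c')) hcase
            simp only [Equiv.Perm.mul_apply, Equiv.Perm.apply_inv_self_s13] at h7
            rw [hdip c' hcc'] at h7
            have hc : c = c₀ := by
              by_contra h
              apply hebi y
              apply (σ c).injective
              rw [h7, hdip c h]
            rw [hc] at h7
            have h8 : eb y = eb pb := by
              rw [hpb]
              apply (σ c₀).injective
              rw [h7, Equiv.Perm.apply_inv_self_s13]
            have h9 := heb h8
            rw [← h9]
            exact hyO
        · refine Or.inr ⟨((σ' c')⁻¹ * σ' c) y, hOstep c c' y hyO, ?_⟩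
          rw [hL1 c c' y, if_neg hcase]
    have hclos : ∀ g ∈ Subgroup.closure
        {g : Equiv.Perm (Fin k) | ∃ c c' : Fin (D + 1), g = (σ c')⁻¹ * σ c},
        (∀ x ∈ T, g x ∈ T) ∧ (∀ x ∈ T, g⁻¹ x ∈ T) := by
      intro g hg
      induction hg using Subgroup.closure_induction with
      | mem g hgmem =>
        obtain ⟨c, c', rfl⟩ := hgmem
        refine ⟨hTstep c c', ?_⟩
        have : ((σ c')⁻¹ * σ c)⁻¹ = (σ c)⁻¹ * σ c' := by
          rw [mul_inv_rev, inv_inv]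
        rw [this]
        exact hTstep c' c
      | one => simp
      | mul g h hgm hhm ihg ihh =>
        refine ⟨fun x hx => ?_, fun x hx => ?_⟩
        · rw [Equiv.Perm.mul_apply]
          exact ihg.1 _ (ihh.1 x hx)
        · rw [mul_inv_rev, Equiv.Perm.mul_apply]
          exact ihh.2 _ (ihg.2 x hx)
      | inv g hgm ihg =>
        exact ⟨ihg.2, by simpa using ihg.1⟩
    obtain ⟨g, hgmem, hgij⟩ := hconn (eb i) (eb j)
    have hTi : eb i ∈ T := Or.inr ⟨i, hOrefl, rfl⟩
    have hTj : eb j ∈ T := by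
      rw [← hgij]
      exact (hclos g hgmem).1 (eb i) hTi
    rcases hTj with ⟨h0, -⟩ | ⟨y, hyO, hy⟩
    · exact absurd h0 (hebi j)
    · obtain ⟨h, hh, hhe⟩ := hyO
      exact ⟨h, hh, by rw [hhe, heb hy]⟩
end
end
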